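/- arXiv:1405.6606 — 9 statements merged into one kernel-verified Lean document; each statement's English description precedes it below -/
import Mathlib

section
/- There exist two collections of points a₁,…,aₙ and b₁,…,bₙ in ℝ² with |aᵢ − aⱼ| ≥ |bᵢ − bⱼ| for all i, j, but with area(Conv{a₁,…,aₙ}) < area(Conv{b₁,…,bₙ}). -/
open MeasureTheory

/-- There exist configurations with `|aᵢ - aⱼ| ≥ |bᵢ - bⱼ|` for all `i, j` but with
`area (Conv {aᵢ}) < area (Conv {bᵢ})`. -/
theorem stmt3 :
    ∃ (n : ℕ) (a b : Fin n → EuclideanSpace ℝ (Fin 2)),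
      (∀ i j, dist (b i) (b j) ≤ dist (a i) (a j)) ∧
      MeasureTheory.volume (convexHull ℝ (Set.range a)) <
        MeasureTheory.volume (convexHull ℝ (Set.range b)) := by
  refine ⟨3, ![!₂[0,0],!₂[2,0],!₂[4,0]], ![!₂[0,0],!₂[1,0],!₂[0,1]], ?_, ?_⟩
  · intro i j
    fin_cases i <;> fin_cases j <;>
      (rw [EuclideanSpace.dist_eq, EuclideanSpace.dist_eq]
       apply Real.sqrt_le_sqrt
       simp [Fin.sum_univ_two, Real.dist_eq]
       try norm_num)
  · have h0 : volume (convexHull ℝ (Set.range ![!₂[0,0],!₂[2,0],!₂[4,0]] :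
        Set (EuclideanSpace ℝ (Fin 2)))) = 0 := by
      set S : Submodule ℝ (EuclideanSpace ℝ (Fin 2)) :=
        LinearMap.ker ((EuclideanSpace.proj (1 : Fin 2) :
          EuclideanSpace ℝ (Fin 2) →L[ℝ] ℝ) : EuclideanSpace ℝ (Fin 2) →ₗ[ℝ] ℝ) with hSdef
      have hS : (convexHull ℝ (Set.range ![!₂[0,0],!₂[2,0],!₂[4,0]] :
          Set (EuclideanSpace ℝ (Fin 2)))) ⊆ S := by
        apply convexHull_min _ S.convex
        rintro x ⟨i, rfl⟩
        fin_cases i <;> simp [hSdef, LinearMap.mem_ker, PiLp.proj_apply]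
      refine measure_mono_null hS (Measure.addHaar_submodule _ S ?_)
      intro h
      have h2 : (!₂[0,1] : EuclideanSpace ℝ (Fin 2)) ∈ S := h ▸ Submodule.mem_top
      have h3 : (1:ℝ) = 0 := h2
      norm_num at h3
    have h1 : 0 < volume (convexHull ℝ (Set.range ![!₂[0,0],!₂[1,0],!₂[0,1]] :
        Set (EuclideanSpace ℝ (Fin 2)))) := by
      have hspan : affineSpan ℝ (Set.range ![!₂[0,0],!₂[1,0],!₂[0,1]] :
          Set (EuclideanSpace ℝ (Fin 2))) = ⊤ := by
        rw [AffineSubspace.affineSpan_eq_top_iff_vectorSpan_eq_top_of_nonempty ℝ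
          (EuclideanSpace ℝ (Fin 2)) (EuclideanSpace ℝ (Fin 2)) ⟨_, Set.mem_range_self 0⟩]
        rw [eq_top_iff]
        intro x _
        have he0 : (!₂[1,0] : EuclideanSpace ℝ (Fin 2)) ∈
            vectorSpan ℝ (Set.range ![!₂[0,0],!₂[1,0],!₂[0,1]] :
              Set (EuclideanSpace ℝ (Fin 2))) := by
          have := vsub_mem_vectorSpan (k := ℝ)
            (Set.mem_range_self (f := (![!₂[0,0],!₂[1,0],!₂[0,1]] : Fin 3 → EuclideanSpace ℝ (Fin 2))) 1)
            (Set.mem_range_self (f := (![!₂[0,0],!₂[1,0],!₂[0,1]] : Fin 3 → EuclideanSpace ℝ (Fin 2))) 0)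
          simpa [show (!₂[0,0] : EuclideanSpace ℝ (Fin 2)) = 0 from by ext i; fin_cases i <;> simp,
            sub_zero] using this
        have he1 : (!₂[0,1] : EuclideanSpace ℝ (Fin 2)) ∈
            vectorSpan ℝ (Set.range ![!₂[0,0],!₂[1,0],!₂[0,1]] :
              Set (EuclideanSpace ℝ (Fin 2))) := by
          have := vsub_mem_vectorSpan (k := ℝ)
            (Set.mem_range_self (f := (![!₂[0,0],!₂[1,0],!₂[0,1]] : Fin 3 → EuclideanSpace ℝ (Fin 2))) 2)
            (Set.mem_range_self (f := (![!₂[0,0],!₂[1,0],!₂[0,1]] : Fin 3 → EuclideanSpace ℝ (Fin 2))) 0)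
          simpa [show (!₂[0,0] : EuclideanSpace ℝ (Fin 2)) = 0 from by ext i; fin_cases i <;> simp,
            sub_zero] using this
        have hx : x = x 0 • (!₂[1,0] : EuclideanSpace ℝ (Fin 2)) + x 1 • !₂[0,1] := by
          ext i
          have hi : ((x 0 • (!₂[1,0] : EuclideanSpace ℝ (Fin 2)) + x 1 • !₂[0,1] : EuclideanSpace ℝ (Fin 2))) i
              = x 0 * (!₂[1,0] : EuclideanSpace ℝ (Fin 2)) i + x 1 * (!₂[0,1] : EuclideanSpace ℝ (Fin 2)) i := rfl
          rw [hi]; fin_cases i <;> simp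
        rw [hx]
        exact Submodule.add_mem _ (Submodule.smul_mem _ _ he0) (Submodule.smul_mem _ _ he1)
      have hconv : Convex ℝ (convexHull ℝ (Set.range ![!₂[0,0],!₂[1,0],!₂[0,1]] :
          Set (EuclideanSpace ℝ (Fin 2)))) := convex_convexHull _ _
      have hint : (interior (convexHull ℝ (Set.range ![!₂[0,0],!₂[1,0],!₂[0,1]] :
          Set (EuclideanSpace ℝ (Fin 2))))).Nonempty := by
        rw [hconv.interior_nonempty_iff_affineSpan_eq_top, affineSpan_convexHull]
        exact hspan
      exact MeasureTheory.Measure.measure_pos_of_nonempty_interior _ hint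
    rw [h0]; exact h1
end

section
/- Let a₁,…,aₙ and b₁,…,bₙ be two collections of points in ℝ². Viewing ℝ² as ℝ² × {0} ⊂ ℝ⁴ = ℝ² × ℝ², define αᵢ(t) = ((aᵢ + bᵢ)/2 + cos(πt)·(aᵢ − bᵢ)/2, sin(πt)·(aᵢ − bᵢ)/2). Then αᵢ(0) = (aᵢ, 0), αᵢ(1) = (bᵢ, 0), and for each pair i, j the function t ↦ |αᵢ(t) − αⱼ(t)| is monotone on [0,1]. -/
open Real

theorem alex_dist {n : ℕ} (a b : Fin n → EuclideanSpace ℝ (Fin 2))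
    (α : Fin n → ℝ → WithLp 2 (EuclideanSpace ℝ (Fin 2) × EuclideanSpace ℝ (Fin 2)))
    (hα : ∀ i t, α i t =
      (WithLp.equiv 2 (EuclideanSpace ℝ (Fin 2) × EuclideanSpace ℝ (Fin 2))).symm
        ((2:ℝ)⁻¹ • (a i + b i) + (Real.cos (Real.pi * t) * (2:ℝ)⁻¹) • (a i - b i),
         (Real.sin (Real.pi * t) * (2:ℝ)⁻¹) • (a i - b i)))
    (i j : Fin n) (t : ℝ) :
    dist (α i t) (α j t) =
      Real.sqrt ((‖(2:ℝ)⁻¹ • (a i + b i) - (2:ℝ)⁻¹ • (a j + b j)‖^2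
          + ‖(2:ℝ)⁻¹ • (a i - b i) - (2:ℝ)⁻¹ • (a j - b j)‖^2)
        + (2 * inner ℝ ((2:ℝ)⁻¹ • (a i + b i) - (2:ℝ)⁻¹ • (a j + b j))
            ((2:ℝ)⁻¹ • (a i - b i) - (2:ℝ)⁻¹ • (a j - b j))) * Real.cos (Real.pi * t)) := by
  set u := (2:ℝ)⁻¹ • (a i + b i) - (2:ℝ)⁻¹ • (a j + b j) with hu
  set v := (2:ℝ)⁻¹ • (a i - b i) - (2:ℝ)⁻¹ • (a j - b j) with hv
  rw [dist_eq_norm, hα, hα, WithLp.equiv_symm_apply, ← WithLp.toLp_sub]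
  have h1 : ((2:ℝ)⁻¹ • (a i + b i) + (Real.cos (Real.pi * t) * (2:ℝ)⁻¹) • (a i - b i),
      (Real.sin (Real.pi * t) * (2:ℝ)⁻¹) • (a i - b i)) -
      ((2:ℝ)⁻¹ • (a j + b j) + (Real.cos (Real.pi * t) * (2:ℝ)⁻¹) • (a j - b j),
      (Real.sin (Real.pi * t) * (2:ℝ)⁻¹) • (a j - b j)) =
      (u + Real.cos (Real.pi * t) • v, Real.sin (Real.pi * t) • v) := by
    rw [Prod.mk_sub_mk, hu, hv]
    simp only [Prod.mk.injEq]
    constructor <;> first | module | trivial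
  rw [h1, WithLp.prod_norm_eq_of_L2]
  simp only [WithLp.toLp_fst, WithLp.toLp_snd]
  congr 1
  rw [norm_add_sq_real, real_inner_smul_right, norm_smul, norm_smul, mul_pow, mul_pow]
  simp only [Real.norm_eq_abs, sq_abs]
  nlinarith [Real.sin_sq_add_cos_sq (Real.pi * t)]

/-- Alexander's curves: `αᵢ(t) = ((aᵢ+bᵢ)/2 + cos(πt)·(aᵢ-bᵢ)/2, sin(πt)·(aᵢ-bᵢ)/2)` in
`ℝ⁴ = ℝ² × ℝ²` satisfy `αᵢ(0) = (aᵢ,0)`, `αᵢ(1) = (bᵢ,0)`, and for each pair `i, j` the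
function `t ↦ |αᵢ(t) - αⱼ(t)|` is monotone on `[0,1]`. -/
theorem stmt4 {n : ℕ} (a b : Fin n → EuclideanSpace ℝ (Fin 2))
    (α : Fin n → ℝ → WithLp 2 (EuclideanSpace ℝ (Fin 2) × EuclideanSpace ℝ (Fin 2)))
    (hα : ∀ i t, α i t =
      (WithLp.equiv 2 (EuclideanSpace ℝ (Fin 2) × EuclideanSpace ℝ (Fin 2))).symm
        ((2:ℝ)⁻¹ • (a i + b i) + (Real.cos (Real.pi * t) * (2:ℝ)⁻¹) • (a i - b i),
         (Real.sin (Real.pi * t) * (2:ℝ)⁻¹) • (a i - b i))) :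
    (∀ i, α i 0 =
        (WithLp.equiv 2 (EuclideanSpace ℝ (Fin 2) × EuclideanSpace ℝ (Fin 2))).symm (a i, 0)) ∧
    (∀ i, α i 1 =
        (WithLp.equiv 2 (EuclideanSpace ℝ (Fin 2) × EuclideanSpace ℝ (Fin 2))).symm (b i, 0)) ∧
    (∀ i j, MonotoneOn (fun t => dist (α i t) (α j t)) (Set.Icc (0:ℝ) 1) ∨
      AntitoneOn (fun t => dist (α i t) (α j t)) (Set.Icc (0:ℝ) 1)) := by
  refine ⟨fun i => ?_, fun i => ?_, fun i j => ?_⟩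
  · rw [hα]
    congr 1
    simp only [mul_zero, Real.cos_zero, Real.sin_zero, one_mul, zero_mul, zero_smul,
      Prod.mk.injEq]
    constructor <;> first | module | trivial
  · rw [hα]
    congr 1
    simp only [mul_one, Real.cos_pi, Real.sin_pi, zero_smul, Prod.mk.injEq]
    constructor <;> first | module | trivial
  · set q : ℝ := 2 * inner ℝ ((2:ℝ)⁻¹ • (a i + b i) - (2:ℝ)⁻¹ • (a j + b j))
        ((2:ℝ)⁻¹ • (a i - b i) - (2:ℝ)⁻¹ • (a j - b j)) with hq
    set p : ℝ := ‖(2:ℝ)⁻¹ • (a i + b i) - (2:ℝ)⁻¹ • (a j + b j)‖^2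
          + ‖(2:ℝ)⁻¹ • (a i - b i) - (2:ℝ)⁻¹ • (a j - b j)‖^2 with hp
    have key : ∀ t, dist (α i t) (α j t) = Real.sqrt (p + q * Real.cos (Real.pi * t)) :=
      fun t => alex_dist a b α hα i j t
    have hcos : ∀ ⦃s t : ℝ⦄, s ∈ Set.Icc (0:ℝ) 1 → t ∈ Set.Icc (0:ℝ) 1 → s ≤ t →
        Real.cos (Real.pi * t) ≤ Real.cos (Real.pi * s) := by
      intro s t hs ht hst
      exact Real.cos_le_cos_of_nonneg_of_le_pi
        (mul_nonneg Real.pi_pos.le hs.1)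
        (by nlinarith [Real.pi_pos, ht.2]) (by nlinarith [Real.pi_pos])
    rcases le_or_gt q 0 with hq0 | hq0
    · left
      intro s hs t ht hst
      simp only [key]
      apply Real.sqrt_le_sqrt
      nlinarith [hcos hs ht hst]
    · right
      intro s hs t ht hst
      simp only [key]
      apply Real.sqrt_le_sqrt
      nlinarith [hcos hs ht hst]
end

section
/- With the curves αᵢ(t) = ((aᵢ + bᵢ)/2 + cos(πt)·(aᵢ − bᵢ)/2, sin(πt)·(aᵢ − bᵢ)/2) in ℝ⁴ = ℝ² × ℝ²: if |aᵢ − aⱼ| = |bᵢ − bⱼ| then |αᵢ(t) − αⱼ(t)| = |aᵢ − aⱼ| for all t ∈ [0,1]. -/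
/-- With the curves `αᵢ(t) = ((aᵢ+bᵢ)/2 + cos(πt)·(aᵢ-bᵢ)/2, sin(πt)·(aᵢ-bᵢ)/2)` in
`ℝ⁴ = ℝ² × ℝ²`: if `|aᵢ - aⱼ| = |bᵢ - bⱼ|` then `|αᵢ(t) - αⱼ(t)| = |aᵢ - aⱼ|` for all
`t ∈ [0,1]`. -/
theorem stmt5 {n : ℕ} (a b : Fin n → EuclideanSpace ℝ (Fin 2))
    (α : Fin n → ℝ → WithLp 2 (EuclideanSpace ℝ (Fin 2) × EuclideanSpace ℝ (Fin 2)))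
    (hα : ∀ i t, α i t =
      (WithLp.equiv 2 (EuclideanSpace ℝ (Fin 2) × EuclideanSpace ℝ (Fin 2))).symm
        ((2:ℝ)⁻¹ • (a i + b i) + (Real.cos (Real.pi * t) * (2:ℝ)⁻¹) • (a i - b i),
         (Real.sin (Real.pi * t) * (2:ℝ)⁻¹) • (a i - b i)))
    (i j : Fin n) (hij : dist (a i) (a j) = dist (b i) (b j)) :
    ∀ t ∈ Set.Icc (0:ℝ) 1, dist (α i t) (α j t) = dist (a i) (a j) := by
  intro t _
  set c := Real.cos (Real.pi * t) with hc
  set s := Real.sin (Real.pi * t) with hs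
  have hcs : c ^ 2 + s ^ 2 = 1 := by
    rw [hc, hs, add_comm]; exact Real.sin_sq_add_cos_sq _
  set u := a i - a j with hu
  set v := b i - b j with hv
  have key : dist (α i t) (α j t) ^ 2 = dist (a i) (a j) ^ 2 := by
    rw [hα, hα, WithLp.prod_dist_eq_of_L2]
    simp only [WithLp.equiv_symm_apply, WithLp.toLp_fst, WithLp.toLp_snd]
    rw [Real.sq_sqrt (by positivity)]
    have h1 : dist ((2:ℝ)⁻¹ • (a i + b i) + (c * (2:ℝ)⁻¹) • (a i - b i))
        ((2:ℝ)⁻¹ • (a j + b j) + (c * (2:ℝ)⁻¹) • (a j - b j))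
        = ‖((1 + c) * (2:ℝ)⁻¹) • u + ((1 - c) * (2:ℝ)⁻¹) • v‖ := by
      rw [dist_eq_norm]
      congr 1
      rw [hu, hv]
      module
    have h2 : dist ((s * (2:ℝ)⁻¹) • (a i - b i)) ((s * (2:ℝ)⁻¹) • (a j - b j))
        = ‖(s * (2:ℝ)⁻¹) • (u - v)‖ := by
      rw [dist_eq_norm]
      congr 1
      rw [hu, hv]
      module
    rw [h1, h2, dist_eq_norm, ← hu]
    have huv : ‖u‖ = ‖v‖ := by
      rw [hu, hv, ← dist_eq_norm, ← dist_eq_norm]; exact hij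
    have e1 : ‖((1 + c) * (2:ℝ)⁻¹) • u + ((1 - c) * (2:ℝ)⁻¹) • v‖ ^ 2
        = ((1 + c) * (2:ℝ)⁻¹) ^ 2 * ‖u‖ ^ 2 + ((1 - c) * (2:ℝ)⁻¹) ^ 2 * ‖v‖ ^ 2
          + 2 * (((1 + c) * (2:ℝ)⁻¹) * ((1 - c) * (2:ℝ)⁻¹)) * inner ℝ u v := by
      rw [← real_inner_self_eq_norm_sq, ← real_inner_self_eq_norm_sq,
        ← real_inner_self_eq_norm_sq]
      simp only [inner_add_add_self, real_inner_smul_left, real_inner_smul_right]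
      rw [real_inner_comm v u]
      ring
    have e2 : ‖(s * (2:ℝ)⁻¹) • (u - v)‖ ^ 2
        = (s * (2:ℝ)⁻¹) ^ 2 * (‖u‖ ^ 2 + ‖v‖ ^ 2 - 2 * inner ℝ u v) := by
      rw [← real_inner_self_eq_norm_sq, ← real_inner_self_eq_norm_sq,
        ← real_inner_self_eq_norm_sq]
      simp only [inner_sub_sub_self, real_inner_smul_left, real_inner_smul_right]
      rw [real_inner_comm v u]
      ring
    rw [e1, e2, ← huv]
    linear_combination ((‖u‖ ^ 2 - (inner ℝ u v : ℝ)) / 2) * hcs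
  have h1 : (0:ℝ) ≤ dist (α i t) (α j t) := dist_nonneg
  have h2 : (0:ℝ) ≤ dist (a i) (a j) := dist_nonneg
  nlinarith [key, h1, h2]
end

section
/- Let E = [p, q] be a segment of length ℓ in a metric space, identified with [0, ℓ], and let h : [0, ℓ] → ℝ² be an affine 1-Lipschitz map whose image is a segment of length ℓ′ ≤ ℓ (or a point). Fix n ≥ 1 and subdivide [0,ℓ] into n equal intervals with endpoints z₀,…,zₙ. Let u be a unit vector normal to the image segment (or any unit vector if the image is a point), s_n(x) = min_i |z_i − x|, k = √(1 − (ℓ′/ℓ)²), and w_n(x) = k·s_n(x)·u + h(x). Then: (a) w_n restricted to each half-interval [z_i, (z_i+z_{i+1})/2] and [(z_i+z_{i+1})/2, z_{i+1}] is an isometric embedding into ℝ²; (b) |w_n(x) − h(x)| ≤ ℓ/(2n) for all x. -/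
lemma inf_abs_first (n : ℕ) (d : ℝ) (hd : 0 < d) (i : ℕ) (hi : i < n) (x : ℝ)
    (h1 : (i : ℝ) * d ≤ x) (h2 : x ≤ (i : ℝ) * d + d / 2) :
    (⨅ j : Fin (n + 1), |x - (j : ℝ) * d|) = x - (i : ℝ) * d := by
  apply le_antisymm
  · have := ciInf_le (Finite.bddBelow_range fun j : Fin (n+1) => |x - (j : ℝ) * d|)
      (⟨i, by omega⟩ : Fin (n+1))
    simpa [abs_of_nonneg (sub_nonneg.mpr h1)] using this
  · apply le_ciInf
    intro j
    rcases le_or_gt (j : ℕ) i with hj | hj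
    · have : (j : ℝ) * d ≤ (i : ℝ) * d := by
        apply mul_le_mul_of_nonneg_right _ hd.le
        exact_mod_cast hj
      calc x - (i:ℝ)*d ≤ x - (j:ℝ)*d := by linarith
        _ ≤ |x - (j:ℝ)*d| := le_abs_self _
    · have : ((i : ℝ) + 1) * d ≤ (j : ℝ) * d := by
        apply mul_le_mul_of_nonneg_right _ hd.le
        have : (i : ℕ) + 1 ≤ (j : ℕ) := hj
        exact_mod_cast this
      calc x - (i:ℝ)*d ≤ (j:ℝ)*d - x := by nlinarith
        _ ≤ |x - (j:ℝ)*d| := by rw [abs_sub_comm]; exact le_abs_self _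

lemma inf_abs_second (n : ℕ) (d : ℝ) (hd : 0 < d) (i : ℕ) (hi : i < n) (x : ℝ)
    (h1 : (i : ℝ) * d + d / 2 ≤ x) (h2 : x ≤ ((i : ℝ) + 1) * d) :
    (⨅ j : Fin (n + 1), |x - (j : ℝ) * d|) = ((i : ℝ) + 1) * d - x := by
  apply le_antisymm
  · have := ciInf_le (Finite.bddBelow_range fun j : Fin (n+1) => |x - (j : ℝ) * d|)
      (⟨i + 1, by omega⟩ : Fin (n+1))
    have e : ((⟨i+1, by omega⟩ : Fin (n+1)) : ℝ) = (i : ℝ) + 1 := by push_cast; ring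
    rw [e] at this
    calc (⨅ j : Fin (n + 1), |x - (j : ℝ) * d|) ≤ |x - ((i:ℝ)+1) * d| := this
      _ = ((i:ℝ)+1)*d - x := by rw [abs_sub_comm, abs_of_nonneg (sub_nonneg.mpr h2)]
  · apply le_ciInf
    intro j
    rcases le_or_gt (j : ℕ) i with hj | hj
    · have : (j : ℝ) * d ≤ (i : ℝ) * d := by
        apply mul_le_mul_of_nonneg_right _ hd.le
        exact_mod_cast hj
      calc ((i:ℝ)+1)*d - x ≤ x - (j:ℝ)*d := by nlinarith
        _ ≤ |x - (j:ℝ)*d| := le_abs_self _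
    · have : ((i : ℝ) + 1) * d ≤ (j : ℝ) * d := by
        apply mul_le_mul_of_nonneg_right _ hd.le
        have : (i : ℕ) + 1 ≤ (j : ℕ) := hj
        exact_mod_cast this
      calc ((i:ℝ)+1)*d - x ≤ (j:ℝ)*d - x := by linarith
        _ ≤ |x - (j:ℝ)*d| := by rw [abs_sub_comm]; exact le_abs_self _

lemma norm_comb (u v : EuclideanSpace ℝ (Fin 2)) (hu : ‖u‖ = 1)
    (huv : (inner ℝ u v : ℝ) = 0) (a b : ℝ) :
    ‖a • u + b • v‖ = Real.sqrt (a ^ 2 + b ^ 2 * ‖v‖ ^ 2) := by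
  rw [← Real.sqrt_sq (norm_nonneg (a • u + b • v))]
  congr 1
  rw [norm_add_sq_real, norm_smul, norm_smul, real_inner_smul_left, real_inner_smul_right, huv]
  simp [hu, mul_pow]

/-- The zigzag construction. `h : [0,ℓ] → ℝ²` is the affine 1-Lipschitz map
`h x = c + x • v` with `‖v‖ = ℓ'/ℓ`, `u` is a unit vector normal to the image,
`s x = minᵢ |x - zᵢ|` for the equally spaced points `zᵢ = i·ℓ/n`, and
`w x = (√(1-(ℓ'/ℓ)²)·s x) • u + h x`.  Then (a) `w` is distance preserving on each of the
half-intervals `[zᵢ, zᵢ + ℓ/(2n)]` and `[zᵢ + ℓ/(2n), zᵢ₊₁]`, and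
(b) `|w x - h x| ≤ ℓ/(2n)` on `[0,ℓ]`. -/
theorem stmt9 (ℓ ℓ' : ℝ) (hl : 0 < ℓ) (hl0 : 0 ≤ ℓ') (hle : ℓ' ≤ ℓ)
    (c v u : EuclideanSpace ℝ (Fin 2))
    (hv : ‖v‖ = ℓ' / ℓ) (hu : ‖u‖ = 1) (huv : (inner ℝ u v : ℝ) = 0)
    (n : ℕ) (hn : 1 ≤ n)
    (h w : ℝ → EuclideanSpace ℝ (Fin 2))
    (hh : ∀ x, h x = c + x • v)
    (s : ℝ → ℝ) (hs : ∀ x, s x = ⨅ i : Fin (n + 1), |x - (i : ℝ) * (ℓ / n)|)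
    (hw : ∀ x, w x = (Real.sqrt (1 - (ℓ' / ℓ) ^ 2) * s x) • u + h x) :
    (∀ i : Fin n,
      (∀ x ∈ Set.Icc ((i : ℝ) * (ℓ / n)) ((i : ℝ) * (ℓ / n) + ℓ / (2 * n)),
        ∀ y ∈ Set.Icc ((i : ℝ) * (ℓ / n)) ((i : ℝ) * (ℓ / n) + ℓ / (2 * n)),
          dist (w x) (w y) = |x - y|) ∧
      (∀ x ∈ Set.Icc ((i : ℝ) * (ℓ / n) + ℓ / (2 * n)) (((i : ℝ) + 1) * (ℓ / n)),
        ∀ y ∈ Set.Icc ((i : ℝ) * (ℓ / n) + ℓ / (2 * n)) (((i : ℝ) + 1) * (ℓ / n)),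
          dist (w x) (w y) = |x - y|)) ∧
    (∀ x ∈ Set.Icc (0 : ℝ) ℓ, dist (w x) (h x) ≤ ℓ / (2 * n)) := by
  set d : ℝ := ℓ / n with hd_def
  have hnpos : (0 : ℝ) < n := by positivity
  have hd : 0 < d := div_pos hl hnpos
  have hhalf : ℓ / (2 * n) = d / 2 := by rw [hd_def]; ring
  set k : ℝ := Real.sqrt (1 - (ℓ' / ℓ) ^ 2) with hk_def
  have hratio : ℓ' / ℓ ≤ 1 := (div_le_one hl).mpr hle
  have hratio0 : 0 ≤ ℓ' / ℓ := by positivity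
  have hk2 : k ^ 2 = 1 - (ℓ' / ℓ) ^ 2 := Real.sq_sqrt (by nlinarith)
  have hk0 : 0 ≤ k := Real.sqrt_nonneg _
  have hk1 : k ≤ 1 := by
    rw [hk_def]
    calc Real.sqrt (1 - (ℓ' / ℓ) ^ 2) ≤ Real.sqrt 1 := Real.sqrt_le_sqrt (by nlinarith)
      _ = 1 := Real.sqrt_one
  -- distance formula when s is affine with slope ±1
  have key : ∀ x y : ℝ, |s x - s y| = |x - y| → dist (w x) (w y) = |x - y| := by
    intro x y hxy
    rw [hw x, hw y, hh x, hh y, dist_eq_norm]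
    have e : (k * s x) • u + (c + x • v) - ((k * s y) • u + (c + y • v))
        = (k * (s x - s y)) • u + (x - y) • v := by
      module
    rw [e, norm_comb u v hu huv, hv]
    have : (k * (s x - s y)) ^ 2 = k ^ 2 * (x - y) ^ 2 := by
      rw [mul_pow, ← sq_abs (s x - s y), hxy, sq_abs]
    rw [this, hk2]
    have : (1 - (ℓ' / ℓ) ^ 2) * (x - y) ^ 2 + (x - y) ^ 2 * (ℓ' / ℓ) ^ 2 = (x - y) ^ 2 := by ring
    rw [this, Real.sqrt_sq_eq_abs]
  constructor
  · intro i
    constructor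
    · intro x hx y hy
      apply key
      rw [hs x, hs y, inf_abs_first n d hd i i.isLt x (by exact_mod_cast hx.1)
          (by rw [← hhalf]; exact_mod_cast hx.2),
        inf_abs_first n d hd i i.isLt y (by exact_mod_cast hy.1)
          (by rw [← hhalf]; exact_mod_cast hy.2)]
      ring_nf
    · intro x hx y hy
      apply key
      rw [hs x, hs y, inf_abs_second n d hd i i.isLt x
          (by rw [← hhalf]; exact_mod_cast hx.1) (by exact_mod_cast hx.2),
        inf_abs_second n d hd i i.isLt y
          (by rw [← hhalf]; exact_mod_cast hy.1) (by exact_mod_cast hy.2)]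
      rw [abs_sub_comm]
      ring_nf
  · intro x hx
    -- find the interval containing x
    obtain ⟨hx0, hxl⟩ := hx
    have hs0 : 0 ≤ s x := by
      rw [hs x]
      exact le_ciInf fun j => abs_nonneg _
    have hsle : s x ≤ d / 2 := by
      set i : ℕ := min (n - 1) (⌊x / d⌋.toNat) with hi_def
      have hi : i < n := by
        have : n - 1 < n := by omega
        omega
      have hge : (i : ℝ) * d ≤ x := by
        rcases le_or_gt (⌊x / d⌋.toNat) (n - 1) with hc | hc
        · have hi_eq : i = ⌊x / d⌋.toNat := by omega
          have h0 : (0:ℤ) ≤ ⌊x / d⌋ := Int.le_floor.mpr (by push_cast; positivity)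
          have : ((⌊x / d⌋.toNat : ℤ) : ℝ) ≤ x / d := by
            rw [Int.toNat_of_nonneg h0]; exact Int.floor_le _
          rw [hi_eq]
          calc (⌊x / d⌋.toNat : ℝ) * d ≤ (x / d) * d := by
                apply mul_le_mul_of_nonneg_right _ hd.le
                exact_mod_cast this
            _ = x := by field_simp
        · have hi_eq : i = n - 1 := by omega
          -- then ⌊x/d⌋ ≥ n, so x ≥ n*d = ℓ, so x = ℓ
          have : (n : ℝ) ≤ x / d := by
            have h1 : (n : ℤ) ≤ ⌊x / d⌋ := by
              have h0 : (0:ℤ) ≤ ⌊x / d⌋ := Int.le_floor.mpr (by push_cast; positivity)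
              omega
            calc (n : ℝ) ≤ (⌊x / d⌋ : ℝ) := by exact_mod_cast h1
              _ ≤ x / d := Int.floor_le _
          have hxn : (n : ℝ) * d ≤ x := by
            calc (n : ℝ) * d ≤ (x / d) * d := mul_le_mul_of_nonneg_right this hd.le
              _ = x := by field_simp
          rw [hi_eq]
          have : ((n - 1 : ℕ) : ℝ) = (n : ℝ) - 1 := by
            have : (1:ℕ) ≤ n := hn
            push_cast [this]; ring
          rw [this]
          nlinarith
      have hlt : x ≤ ((i : ℝ) + 1) * d := by
        rcases le_or_gt (⌊x / d⌋.toNat) (n - 1) with hc | hc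
        · have hi_eq : i = ⌊x / d⌋.toNat := by omega
          have h0 : (0:ℤ) ≤ ⌊x / d⌋ := Int.le_floor.mpr (by push_cast; positivity)
          have : x / d < ((⌊x / d⌋.toNat : ℤ) : ℝ) + 1 := by
            rw [Int.toNat_of_nonneg h0]; exact Int.lt_floor_add_one _
          rw [hi_eq]
          have := (div_lt_iff₀ hd).mp (by push_cast at this ⊢; linarith : x / d < (⌊x / d⌋.toNat : ℝ) + 1)
          push_cast
          linarith
        · have hi_eq : i = n - 1 := by omega
          rw [hi_eq]
          have : ((n - 1 : ℕ) : ℝ) + 1 = (n : ℝ) := by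
            have : (1:ℕ) ≤ n := hn
            push_cast [this]; ring
          rw [this]
          calc x ≤ ℓ := hxl
            _ = (n : ℝ) * d := by rw [hd_def]; field_simp
      -- s x ≤ min of the two endpoint distances
      have hA : s x ≤ x - (i : ℝ) * d := by
        rw [hs x]
        have := ciInf_le (Finite.bddBelow_range fun j : Fin (n+1) => |x - (j : ℝ) * d|)
          (⟨i, by omega⟩ : Fin (n+1))
        simpa [abs_of_nonneg (sub_nonneg.mpr hge)] using this
      have hB : s x ≤ ((i : ℝ) + 1) * d - x := by
        rw [hs x]
        have := ciInf_le (Finite.bddBelow_range fun j : Fin (n+1) => |x - (j : ℝ) * d|)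
          (⟨i + 1, by omega⟩ : Fin (n+1))
        have e : ((⟨i+1, by omega⟩ : Fin (n+1)) : ℝ) = (i : ℝ) + 1 := by push_cast; ring
        rw [e] at this
        calc (⨅ j : Fin (n + 1), |x - (j : ℝ) * (ℓ / n)|) ≤ |x - ((i:ℝ)+1) * d| := this
          _ = ((i:ℝ)+1)*d - x := by rw [abs_sub_comm, abs_of_nonneg (sub_nonneg.mpr hlt)]
      linarith
    rw [hw x, dist_eq_norm, hhalf]
    have e : (k * s x) • u + h x - h x = (k * s x) • u := by abel
    rw [e, norm_smul, hu, mul_one]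
    rw [Real.norm_eq_abs, abs_of_nonneg (mul_nonneg hk0 hs0)]
    calc k * s x ≤ 1 * s x := mul_le_mul_of_nonneg_right hk1 hs0
      _ = s x := one_mul _
      _ ≤ d / 2 := hsle
end

section
/- Let Δ be a non-degenerate 3-simplex (tetrahedron) in ℝ³ with faces F₁, F₂, F₃, F₄, and let ∂Δ carry its intrinsic (induced length) metric. There is no map f : ∂Δ → ℝ² whose restriction to each of the four faces Fᵢ is an isometric embedding (with respect to the Euclidean distance on each face). -/
open scoped RealInnerProductSpace

private lemma inner_eq_of_dist' {E F : Type*} [NormedAddCommGroup E] [InnerProductSpace ℝ E]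
    [NormedAddCommGroup F] [InnerProductSpace ℝ F] {a b c : E} {a' b' c' : F}
    (h1 : dist a' c' = dist a c) (h2 : dist b' c' = dist b c) (h3 : dist a' b' = dist a b) :
    ⟪a' - c', b' - c'⟫ = ⟪a - c, b - c⟫ := by
  have h4 : a' - c' - (b' - c') = a' - b' := by abel
  have h5 : a - c - (b - c) = a - b := by abel
  have eE := norm_sub_sq_real (a - c) (b - c)
  have eF := norm_sub_sq_real (a' - c') (b' - c')
  rw [h4] at eF
  rw [h5] at eE
  simp only [dist_eq_norm] at h1 h2 h3
  rw [h1, h2, h3] at eF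
  linarith

/-- The boundary of a non-degenerate tetrahedron in ℝ³ admits no map to ℝ² which is
distance preserving on each of the four faces. -/
theorem stmt10 (v : Fin 4 → EuclideanSpace ℝ (Fin 3)) (hv : AffineIndependent ℝ v) :
    ¬ ∃ f : EuclideanSpace ℝ (Fin 3) → EuclideanSpace ℝ (Fin 2),
        ∀ i : Fin 4, ∀ x ∈ convexHull ℝ (v '' {j | j ≠ i}),
          ∀ y ∈ convexHull ℝ (v '' {j | j ≠ i}), dist (f x) (f y) = dist x y := by
  rintro ⟨f, hf⟩
  set w : Fin 4 → EuclideanSpace ℝ (Fin 2) := fun i => f (v i) with hw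
  -- every pair of vertices lies on a common face, so f preserves all pairwise distances
  have hd : ∀ j k : Fin 4, dist (w j) (w k) = dist (v j) (v k) := by
    intro j k
    obtain ⟨i, hij, hik⟩ : ∃ i : Fin 4, j ≠ i ∧ k ≠ i := by
      revert j k; decide
    exact hf i (v j) (subset_convexHull ℝ _ ⟨j, hij, rfl⟩) (v k)
      (subset_convexHull ℝ _ ⟨k, hik, rfl⟩)
  have hinner : ∀ j k : Fin 4,
      ⟪w j - w 3, w k - w 3⟫ = ⟪v j - v 3, v k - v 3⟫ :=
    fun j k => inner_eq_of_dist' (hd j 3) (hd k 3) (hd j k)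
  have hli : LinearIndependent ℝ (fun i : {x : Fin 4 // x ≠ 3} => v i - v (3 : Fin 4)) := by
    have := (affineIndependent_iff_linearIndependent_vsub ℝ v 3).mp hv
    simpa [vsub_eq_sub] using this
  have hli' : LinearIndependent ℝ (fun i : {x : Fin 4 // x ≠ 3} => w i - w (3 : Fin 4)) := by
    rw [Fintype.linearIndependent_iff] at hli ⊢
    intro g hg
    apply hli g
    have key : ⟪∑ i : {x : Fin 4 // x ≠ 3}, g i • (v i - v (3 : Fin 4)),
        ∑ i : {x : Fin 4 // x ≠ 3}, g i • (v i - v (3 : Fin 4))⟫ = (0 : ℝ) := by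
      have expand : ⟪∑ i : {x : Fin 4 // x ≠ 3}, g i • (v i - v (3 : Fin 4)),
          ∑ i : {x : Fin 4 // x ≠ 3}, g i • (v i - v (3 : Fin 4))⟫ =
          ⟪∑ i : {x : Fin 4 // x ≠ 3}, g i • (w i - w (3 : Fin 4)),
          ∑ i : {x : Fin 4 // x ≠ 3}, g i • (w i - w (3 : Fin 4))⟫ := by
        rw [sum_inner, sum_inner]
        refine Finset.sum_congr rfl fun i _ => ?_
        rw [inner_sum, inner_sum]
        refine Finset.sum_congr rfl fun j _ => ?_
        rw [real_inner_smul_left, real_inner_smul_left, real_inner_smul_right,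
          real_inner_smul_right, hinner]
      rw [expand, hg, inner_zero_right]
    exact inner_self_eq_zero.mp key
  have hcard := hli'.fintype_card_le_finrank
  have h2 : Module.finrank ℝ (EuclideanSpace ℝ (Fin 2)) = 2 := finrank_euclideanSpace_fin
  have h3 : Fintype.card {x : Fin 4 // x ≠ 3} = 3 := by
    simp [Fintype.card_subtype_compl]
  omega
end

section
/- There exists no 1-dimensional piecewise distance preserving map onto a lower dimension: if P is an m-dimensional polyhedral space admitting a piecewise distance preserving map f : P → ℝⁿ, then n ≥ m. -/
open Finset in
private lemma inner_eq_of_dist_eq {E F : Type*} [NormedAddCommGroup E] [InnerProductSpace ℝ E]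
    [NormedAddCommGroup F] [InnerProductSpace ℝ F] {x y z : E} {x' y' z' : F}
    (hxz : dist x' z' = dist x z) (hyz : dist y' z' = dist y z)
    (hxy : dist x' y' = dist x y) :
    (inner ℝ (x' - z') (y' - z') : ℝ) = inner ℝ (x - z) (y - z) := by
  have h1 := norm_sub_sq_real (x - z) (y - z)
  have h2 := norm_sub_sq_real (x' - z') (y' - z')
  have e1 : x - z - (y - z) = x - y := by abel
  have e2 : x' - z' - (y' - z') = x' - y' := by abel
  rw [e1] at h1; rw [e2] at h2
  simp only [dist_eq_norm] at hxz hyz hxy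
  rw [hxz, hyz, hxy] at h2
  linarith

open Finset in
private lemma linearIndependent_of_inner_eq {ι E F : Type*} [Fintype ι]
    [NormedAddCommGroup E] [InnerProductSpace ℝ E]
    [NormedAddCommGroup F] [InnerProductSpace ℝ F]
    {v : ι → E} {w : ι → F}
    (h : ∀ j k, (inner ℝ (w j) (w k) : ℝ) = inner ℝ (v j) (v k))
    (hv : LinearIndependent ℝ v) : LinearIndependent ℝ w := by
  rw [Fintype.linearIndependent_iff] at hv ⊢
  intro c hc
  have key : (inner ℝ (∑ j, c j • v j) (∑ j, c j • v j) : ℝ)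
      = inner ℝ (∑ j, c j • w j) (∑ j, c j • w j) := by
    simp only [sum_inner, inner_sum, real_inner_smul_left, real_inner_smul_right, h]
  rw [hc, inner_zero_left] at key
  have hz : ∑ j, c j • v j = 0 := by
    have := real_inner_self_eq_norm_sq (∑ j, c j • v j)
    rw [key] at this
    have : ‖∑ j, c j • v j‖ = 0 := by nlinarith [norm_nonneg (∑ j, c j • v j)]
    simpa [norm_eq_zero] using this
  exact hv c hz

/-- If an `m`-dimensional polyhedral space `P` (given by a finite cover by pieces, each
isometric to a Euclidean simplex of dimension `dims i`, with some piece of dimension `m`)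
admits a map `f : P → ℝⁿ` which is distance preserving on each piece, then `n ≥ m`. -/
theorem stmt11 {P : Type*} [MetricSpace P] {m n N : ℕ}
    (S : Fin N → Set P) (dims : Fin N → ℕ)
    (hcover : (⋃ i, S i) = Set.univ)
    (hsimp : ∀ i, ∃ v : Fin (dims i + 1) → EuclideanSpace ℝ (Fin (dims i)),
      AffineIndependent ℝ v ∧
      ∃ φ : P → EuclideanSpace ℝ (Fin (dims i)),
        (∀ x ∈ S i, ∀ y ∈ S i, dist (φ x) (φ y) = dist x y) ∧
        φ '' S i = convexHull ℝ (Set.range v))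
    (hdim : ∃ i, dims i = m)
    (f : P → EuclideanSpace ℝ (Fin n))
    (hf : ∀ i, ∀ x ∈ S i, ∀ y ∈ S i, dist (f x) (f y) = dist x y) :
    m ≤ n := by
  obtain ⟨i, hi⟩ := hdim
  subst hi
  obtain ⟨v, hv, φ, hφd, hφimg⟩ := hsimp i
  -- pick preimages of the vertices
  have hp : ∀ j, ∃ x ∈ S i, φ x = v j := by
    intro j
    have : v j ∈ φ '' S i := by
      rw [hφimg]
      exact subset_convexHull ℝ _ (Set.mem_range_self j)
    obtain ⟨x, hx, hxe⟩ := this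
    exact ⟨x, hx, hxe⟩
  choose p hpS hpφ using hp
  -- distances of images under f agree with distances of vertices
  have hdist : ∀ j k, dist (f (p j)) (f (p k)) = dist (v j) (v k) := by
    intro j k
    rw [hf i _ (hpS j) _ (hpS k), ← hφd _ (hpS j) _ (hpS k), hpφ, hpφ]
  -- affine independence gives linear independence of differences
  have hli : LinearIndependent ℝ
      (fun j : {x : Fin (dims i + 1) // x ≠ 0} => v ↑j -ᵥ v 0) :=
    (affineIndependent_iff_linearIndependent_vsub ℝ v 0).mp hv
  have hli' : LinearIndependent ℝ
      (fun j : {x : Fin (dims i + 1) // x ≠ 0} => f (p ↑j) - f (p 0)) := by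
    apply linearIndependent_of_inner_eq (v := fun j : {x : Fin (dims i + 1) // x ≠ 0} =>
      v ↑j -ᵥ v 0)
    · intro j k
      simp only [vsub_eq_sub]
      exact inner_eq_of_dist_eq (hdist _ _) (hdist _ _) (hdist _ _)
    · exact hli
  have hcard := hli'.fintype_card_le_finrank
  rw [finrank_euclideanSpace_fin] at hcard
  have : Fintype.card {x : Fin (dims i + 1) // x ≠ 0} = dims i := by
    simp [Fintype.card_subtype_compl]
  omega
end

section
/- With f(x) = d(x)·u_{i(x)} as above on the unit square: the image f([0,1]²) is the union of n² line segments of length 1/(2n) emanating from the origin, so the total perimeter of the image (counting each segment twice) equals n. In particular, for n > 4 this exceeds the perimeter 4 of the original unit square. -/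
open Metric Set

noncomputable def pt (a b : ℝ) : EuclideanSpace ℝ (Fin 2) :=
  (WithLp.equiv 2 (Fin 2 → ℝ)).symm ![a, b]

@[simp] lemma pt_zero (a b : ℝ) : pt a b 0 = a := rfl
@[simp] lemma pt_one (a b : ℝ) : pt a b 1 = b := rfl

lemma dist_formula (x y : EuclideanSpace ℝ (Fin 2)) :
    dist x y = Real.sqrt ((x 0 - y 0)^2 + (x 1 - y 1)^2) := by
  rw [EuclideanSpace.dist_eq, Fin.sum_univ_two]
  simp [Real.dist_eq, sq_abs]

lemma coord_dist (x y : EuclideanSpace ℝ (Fin 2)) (i : Fin 2) : |x i - y i| ≤ dist x y := by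
  rw [dist_formula, ← Real.sqrt_sq_eq_abs]
  apply Real.sqrt_le_sqrt
  fin_cases i <;> simp <;> nlinarith [sq_nonneg (x 0 - y 0), sq_nonneg (x 1 - y 1)]

def box (a c s : ℝ) : Set (EuclideanSpace ℝ (Fin 2)) :=
  {y | a ≤ y 0 ∧ y 0 ≤ a + s ∧ c ≤ y 1 ∧ y 1 ≤ c + s}

def obox (a c s : ℝ) : Set (EuclideanSpace ℝ (Fin 2)) :=
  {y | a < y 0 ∧ y 0 < a + s ∧ c < y 1 ∧ y 1 < c + s}

lemma obox_open (a c s : ℝ) : IsOpen (obox a c s) := by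
  have h0 : Continuous fun y : EuclideanSpace ℝ (Fin 2) => y 0 :=
    (EuclideanSpace.proj (0 : Fin 2) : EuclideanSpace ℝ (Fin 2) →L[ℝ] ℝ).continuous
  have h1 : Continuous fun y : EuclideanSpace ℝ (Fin 2) => y 1 :=
    (EuclideanSpace.proj (1 : Fin 2) : EuclideanSpace ℝ (Fin 2) →L[ℝ] ℝ).continuous
  have : obox a c s = ({y : EuclideanSpace ℝ (Fin 2) | a < y 0} ∩ {y | y 0 < a + s}) ∩
      ({y | c < y 1} ∩ {y | y 1 < c + s}) := by
    ext y; simp [obox]; tauto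
  rw [this]
  exact (((isOpen_lt continuous_const h0).inter (isOpen_lt h0 continuous_const)).inter
    ((isOpen_lt continuous_const h1).inter (isOpen_lt h1 continuous_const)))

lemma interior_box (a c s : ℝ) : interior (box a c s) = obox a c s := by
  apply Subset.antisymm
  · intro y hy
    rcases Metric.mem_nhds_iff.1 (mem_interior_iff_mem_nhds.1 hy) with ⟨ε, hε, hball⟩
    have key : ∀ (i : Fin 2) (v : ℝ), |v| = 1 →
        (y + (ε/2) • EuclideanSpace.single i v) ∈ box a c s := by
      intro i v hv
      apply hball
      rw [mem_ball, dist_self_add_left, norm_smul, EuclideanSpace.norm_single,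
        Real.norm_eq_abs, Real.norm_eq_abs, hv, abs_of_pos (by linarith)]
      linarith
    have e : ∀ (i j : Fin 2) (v : ℝ),
        (y + (ε/2) • EuclideanSpace.single i v) j = y j + (ε/2) * (if j = i then v else 0) := by
      intro i j v
      simp [EuclideanSpace.single_apply]
    have k1 := key 0 1 (by norm_num)
    have k2 := key 0 (-1) (by norm_num)
    have k3 := key 1 1 (by norm_num)
    have k4 := key 1 (-1) (by norm_num)
    obtain ⟨a1, a2, a3, a4⟩ := k1
    obtain ⟨b1, b2, b3, b4⟩ := k2
    obtain ⟨c1, c2, c3, c4⟩ := k3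
    obtain ⟨d1, d2, d3, d4⟩ := k4
    rw [e] at a1 a2 b1 b2
    rw [e] at c3 c4 d3 d4
    simp at a1 a2 b1 b2 c3 c4 d3 d4
    exact ⟨by linarith, by linarith, by linarith, by linarith⟩
  · exact interior_maximal (fun y ⟨h1, h2, h3, h4⟩ => ⟨h1.le, h2.le, h3.le, h4.le⟩)
      (obox_open a c s)

lemma mem_frontier_box {a c s : ℝ} {y : EuclideanSpace ℝ (Fin 2)} (hy : y ∈ box a c s)
    (h : y 0 = a ∨ y 0 = a + s ∨ y 1 = c ∨ y 1 = c + s) : y ∈ frontier (box a c s) := by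
  refine ⟨subset_closure hy, ?_⟩
  rw [interior_box]
  rintro ⟨h1, h2, h3, h4⟩
  rcases h with h | h | h | h <;> linarith

lemma frontier_box_nonempty {a c s : ℝ} (hs : 0 ≤ s) : (frontier (box a c s)).Nonempty :=
  ⟨pt a c, mem_frontier_box ⟨le_rfl, by simp only [pt_zero]; linarith, le_rfl, by simp only [pt_one]; linarith⟩
    (Or.inl rfl)⟩

lemma infDist_le_half {a c s : ℝ} (hs : 0 < s) {x : EuclideanSpace ℝ (Fin 2)}
    (hx : x ∈ box a c s) : infDist x (frontier (box a c s)) ≤ s / 2 := by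
  obtain ⟨h1, h2, h3, h4⟩ := hx
  by_cases hc : x 0 ≤ a + s / 2
  · have hmem : pt a (x 1) ∈ frontier (box a c s) :=
      mem_frontier_box ⟨le_rfl, by simp only [pt_zero]; linarith, h3, h4⟩ (Or.inl rfl)
    calc infDist x (frontier (box a c s)) ≤ dist x (pt a (x 1)) :=
          infDist_le_dist_of_mem hmem
      _ = |x 0 - a| := by rw [dist_formula]; simp; exact Real.sqrt_sq_eq_abs _
      _ ≤ s / 2 := by rw [abs_of_nonneg (by linarith)]; linarith
  · have hmem : pt (a + s) (x 1) ∈ frontier (box a c s) :=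
      mem_frontier_box ⟨by simp only [pt_zero]; linarith, le_rfl, h3, h4⟩ (Or.inr (Or.inl rfl))
    calc infDist x (frontier (box a c s)) ≤ dist x (pt (a + s) (x 1)) :=
          infDist_le_dist_of_mem hmem
      _ = |x 0 - (a + s)| := by rw [dist_formula]; simp; exact Real.sqrt_sq_eq_abs _
      _ ≤ s / 2 := by rw [abs_of_nonpos (by linarith)]; linarith

lemma infDist_box_eq {a c s t : ℝ} (hs : 0 < s) (ht0 : 0 ≤ t) (hts : t ≤ s / 2) :
    infDist (pt (a + t) (c + s / 2)) (frontier (box a c s)) = t := by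
  set x := pt (a + t) (c + s / 2) with hxdef
  have hx0 : x 0 = a + t := rfl
  have hx1 : x 1 = c + s / 2 := rfl
  apply le_antisymm
  · have hmem : pt a (c + s / 2) ∈ frontier (box a c s) :=
      mem_frontier_box ⟨le_rfl, by simp only [pt_zero]; linarith, by simp only [pt_one]; linarith, by simp only [pt_one]; linarith⟩ (Or.inl rfl)
    calc infDist x (frontier (box a c s)) ≤ dist x (pt a (c + s / 2)) :=
          infDist_le_dist_of_mem hmem
      _ = |x 0 - a| := by rw [dist_formula]; simp [hx1]; exact Real.sqrt_sq_eq_abs _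
      _ = t := by rw [hx0]; simp [abs_of_nonneg ht0]
  · by_contra h
    push_neg at h
    obtain ⟨y, hyf, hyd⟩ := (infDist_lt_iff (frontier_box_nonempty hs.le)).1 h
    have h0 := (coord_dist x y 0).trans_lt hyd
    have h1 := (coord_dist x y 1).trans_lt hyd
    rw [abs_lt] at h0 h1
    have hy : y ∈ interior (box a c s) := by
      rw [interior_box]
      rw [hx0] at h0; rw [hx1] at h1
      exact ⟨by linarith, by linarith, by linarith, by linarith⟩
    exact hyf.2 hy

/-- With `f x = d(x) • u (ι x)` as in the subdivision of the unit square into `n²`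
subsquares: the image `f(S)` is the union of the `n²` segments of length `1/(2n)` from the
origin in the directions `u p`; the total perimeter of this image (each segment counted
twice) equals `n`, which exceeds the perimeter `4` of the square when `n > 4`. -/
theorem stmt16 (n : ℕ) (hn : 1 ≤ n)
    (u : Fin n × Fin n → EuclideanSpace ℝ (Fin 2))
    (hu : ∀ p, ‖u p‖ = 1) (huinj : Function.Injective u)
    (Q : Fin n × Fin n → Set (EuclideanSpace ℝ (Fin 2)))
    (hQ : ∀ p, Q p = {y | (p.1 : ℝ) / n ≤ y 0 ∧ y 0 ≤ ((p.1 : ℝ) + 1) / n ∧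
      (p.2 : ℝ) / n ≤ y 1 ∧ y 1 ≤ ((p.2 : ℝ) + 1) / n})
    (S : Set (EuclideanSpace ℝ (Fin 2)))
    (hS : S = {y : EuclideanSpace ℝ (Fin 2) | y 0 ∈ Set.Icc (0:ℝ) 1 ∧ y 1 ∈ Set.Icc (0:ℝ) 1})
    (ι : EuclideanSpace ℝ (Fin 2) → Fin n × Fin n)
    (hι : ∀ x ∈ S, x ∈ Q (ι x))
    (f : EuclideanSpace ℝ (Fin 2) → EuclideanSpace ℝ (Fin 2))
    (hf : ∀ x, f x = Metric.infDist x (frontier (Q (ι x))) • u (ι x)) :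
    (f '' S = ⋃ p : Fin n × Fin n, (fun t : ℝ => t • u p) '' Set.Icc 0 (1 / (2 * n))) ∧
    (2 * ∑ _p : Fin n × Fin n, (1 / (2 * (n : ℝ))) = n) ∧
    (4 < n → (4 : ℝ) < 2 * ∑ _p : Fin n × Fin n, (1 / (2 * (n : ℝ)))) := by
  have hn0 : (0 : ℝ) < n := by exact_mod_cast hn
  have hs : (0 : ℝ) < 1 / n := by positivity
  have hhalf : (1 : ℝ) / (2 * n) = (1 / n) / 2 := by field_simp
  have hQbox : ∀ p, Q p = box ((p.1 : ℝ) / n) ((p.2 : ℝ) / n) (1 / n) := by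
    intro p
    rw [hQ]
    unfold box
    simp_rw [add_div]
  have hsum : (2 : ℝ) * ∑ _p : Fin n × Fin n, (1 / (2 * (n : ℝ))) = n := by
    rw [Finset.sum_const, Finset.card_univ]
    simp only [Fintype.card_prod, Fintype.card_fin, nsmul_eq_mul]
    push_cast
    field_simp
  refine ⟨?_, hsum, fun h4 => by rw [hsum]; exact_mod_cast h4⟩
  ext z
  simp only [Set.mem_image, Set.mem_iUnion]
  constructor
  · rintro ⟨x, hxS, rfl⟩
    refine ⟨ι x, Metric.infDist x (frontier (Q (ι x))), ⟨Metric.infDist_nonneg, ?_⟩,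
      (hf x).symm⟩
    rw [hhalf, hQbox (ι x)]
    exact infDist_le_half hs (by rw [← hQbox (ι x)]; exact hι x hxS)
  · rintro ⟨p, t, ⟨ht0, ht1⟩, rfl⟩
    rw [hhalf] at ht1
    rcases eq_or_lt_of_le ht0 with h0 | h0
    · -- t = 0 : use the origin
      refine ⟨pt 0 0, ?_, ?_⟩
      · rw [hS]; constructor <;> simp
      · have hx := hι (pt 0 0) (by rw [hS]; constructor <;> simp)
        rw [hQbox (ι (pt 0 0))] at hx
        have hq1 : ((ι (pt 0 0)).1 : ℝ) / n = 0 :=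
          le_antisymm (by simpa using hx.1) (by positivity)
        have hfr : pt 0 0 ∈ frontier (Q (ι (pt 0 0))) := by
          rw [hQbox (ι (pt 0 0))]
          exact mem_frontier_box hx (Or.inl (by simp [hq1]))
        rw [hf, Metric.infDist_zero_of_mem hfr, ← h0, zero_smul, zero_smul]
    · -- t > 0 : interior point
      set a := ((p.1 : ℝ)) / n with ha
      set c := ((p.2 : ℝ)) / n with hc
      have hp1 : (p.1 : ℝ) ≤ (n : ℝ) - 1 := by
        have := p.1.isLt; push_cast
        have : ((p.1 : ℕ) : ℝ) ≤ ((n - 1 : ℕ) : ℝ) := by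
          exact_mod_cast Nat.le_sub_one_of_lt p.1.isLt
        rw [Nat.cast_sub hn] at this
        simpa using this
      have hp2 : (p.2 : ℝ) ≤ (n : ℝ) - 1 := by
        have : ((p.2 : ℕ) : ℝ) ≤ ((n - 1 : ℕ) : ℝ) := by
          exact_mod_cast Nat.le_sub_one_of_lt p.2.isLt
        rw [Nat.cast_sub hn] at this
        simpa using this
      have ha0 : 0 ≤ a := by positivity
      have hc0 : 0 ≤ c := by positivity
      have ha1 : a ≤ 1 - 1 / n := by
        rw [ha, div_le_iff₀ hn0]
        have : (1 - 1 / (n : ℝ)) * n = n - 1 := by field_simp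
        rw [this]; exact hp1
      have hc1 : c ≤ 1 - 1 / n := by
        rw [hc, div_le_iff₀ hn0]
        have : (1 - 1 / (n : ℝ)) * n = n - 1 := by field_simp
        rw [this]; exact hp2
      set x := pt (a + t) (c + (1 / n) / 2) with hx
      have hxS : x ∈ S := by
        rw [hS]
        refine ⟨⟨?_, ?_⟩, ?_, ?_⟩ <;> simp only [hx, pt_zero, pt_one] <;> linarith
      have hxobox : ∀ q, x ∈ box ((q.1 : ℝ) / n) ((q.2 : ℝ) / n) (1 / n) → q = p := by
        rintro q ⟨g1, g2, g3, g4⟩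
        simp only [hx, pt_zero, pt_one] at g1 g2 g3 g4
        have e1 : (q.1 : ℕ) = (p.1 : ℕ) := by
          have l1 : (q.1 : ℝ) / n < a + 1 / n := lt_of_le_of_lt g1 (by linarith)
          have l2 : a < (q.1 : ℝ) / n + 1 / n := lt_of_lt_of_le (by linarith) g2
          rw [ha, ← add_div, div_lt_div_iff₀ hn0 hn0] at l1 l2
          have r1 : (q.1 : ℝ) < (p.1 : ℝ) + 1 := lt_of_mul_lt_mul_right l1 hn0.le
          have r2 : (p.1 : ℝ) < (q.1 : ℝ) + 1 := lt_of_mul_lt_mul_right l2 hn0.le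
          have n1 : (q.1 : ℕ) < (p.1 : ℕ) + 1 := by exact_mod_cast r1
          have n2 : (p.1 : ℕ) < (q.1 : ℕ) + 1 := by exact_mod_cast r2
          omega
        have e2 : (q.2 : ℕ) = (p.2 : ℕ) := by
          have l1 : (q.2 : ℝ) / n < c + 1 / n := lt_of_le_of_lt g3 (by linarith)
          have l2 : c < (q.2 : ℝ) / n + 1 / n := lt_of_lt_of_le (by linarith) g4
          rw [hc, ← add_div, div_lt_div_iff₀ hn0 hn0] at l1 l2
          have r1 : (q.2 : ℝ) < (p.2 : ℝ) + 1 := lt_of_mul_lt_mul_right l1 hn0.le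
          have r2 : (p.2 : ℝ) < (q.2 : ℝ) + 1 := lt_of_mul_lt_mul_right l2 hn0.le
          have n1 : (q.2 : ℕ) < (p.2 : ℕ) + 1 := by exact_mod_cast r1
          have n2 : (p.2 : ℕ) < (q.2 : ℕ) + 1 := by exact_mod_cast r2
          omega
        have f1 : q.1 = p.1 := Fin.ext e1
        have f2 : q.2 = p.2 := Fin.ext e2
        exact Prod.ext f1 f2
      have hιx : ι x = p := by
        apply hxobox
        rw [← hQbox (ι x)]
        exact hι x hxS
      refine ⟨x, hxS, ?_⟩
      rw [hf, hιx, hQbox p, ← ha, ← hc, hx, infDist_box_eq hs ht0 ht1]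
end

section
/- Finite Kirszbraun in the plane (extension by one point): Let a₁,…,aₙ and b₁,…,bₙ be points in ℝ² with |aᵢ − aⱼ| ≥ |bᵢ − bⱼ| for all i, j, and let a be any additional point in ℝ². Then there exists b ∈ ℝ² such that |b − bᵢ| ≤ |a − aᵢ| for all i. -/
open Finset Metric

local notation "V" => EuclideanSpace ℝ (Fin 2)

private lemma kirsz_inner_key {u₁ u₂ v₁ v₂ : V}
    (h1 : ‖v₁‖ < ‖u₁‖) (h2 : ‖v₂‖ < ‖u₂‖) (h3 : ‖u₁ - u₂‖ ≤ ‖v₁ - v₂‖) :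
    (inner ℝ v₁ v₂ : ℝ) < inner ℝ u₁ u₂ := by
  have e1 : ‖u₁ - u₂‖ ^ 2 = ‖u₁‖ ^ 2 - 2 * inner ℝ u₁ u₂ + ‖u₂‖ ^ 2 :=
    norm_sub_sq_real u₁ u₂
  have e2 : ‖v₁ - v₂‖ ^ 2 = ‖v₁‖ ^ 2 - 2 * inner ℝ v₁ v₂ + ‖v₂‖ ^ 2 :=
    norm_sub_sq_real v₁ v₂
  have h3' : ‖u₁ - u₂‖ ^ 2 ≤ ‖v₁ - v₂‖ ^ 2 := by
    have := norm_nonneg (u₁ - u₂); nlinarith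
  have hn1 : 0 ≤ ‖v₁‖ := norm_nonneg _
  have hn2 : 0 ≤ ‖v₂‖ := norm_nonneg _
  nlinarith

/-- Single-point Kirszbraun extension in the plane: if `|aᵢ - aⱼ| ≥ |bᵢ - bⱼ|` for all
`i, j` and `a` is a further point, then there is `b` with `|b - bᵢ| ≤ |a - aᵢ|` for all `i`. -/
theorem stmt17 {n : ℕ} (a b : Fin n → EuclideanSpace ℝ (Fin 2))
    (h : ∀ i j, dist (b i) (b j) ≤ dist (a i) (a j))
    (a' : EuclideanSpace ℝ (Fin 2)) :
    ∃ b' : EuclideanSpace ℝ (Fin 2), ∀ i, dist b' (b i) ≤ dist a' (a i) := by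
  classical
  rcases Nat.eq_zero_or_pos n with hn | hn
  · subst hn; exact ⟨0, fun i => i.elim0⟩
  have hne : (Finset.univ : Finset (Fin n)).Nonempty := ⟨⟨0, hn⟩, mem_univ _⟩
  set r : Fin n → ℝ := fun i => dist a' (a i) with hr
  have hr0 : ∀ i, 0 ≤ r i := fun i => dist_nonneg
  -- the function to minimize
  set f : V → ℝ := fun x => Finset.univ.sup' hne (fun i => dist x (b i) - r i) with hf
  have hle : ∀ x i, dist x (b i) - r i ≤ f x := fun x i =>
    Finset.le_sup' (fun i => dist x (b i) - r i) (mem_univ i)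
  have hlip : LipschitzWith 1 f := by
    apply LipschitzWith.of_le_add
    intro x y
    apply Finset.sup'_le
    intro i _
    have := dist_triangle x y (b i)
    have := hle y i
    linarith [dist_comm x y ▸ (by linarith [dist_triangle x y (b i)] : dist x (b i) - r i ≤ (dist y (b i) - r i) + dist x y)]
  have hfc : Continuous f := hlip.continuous
  -- minimize f on a big closed ball
  have i0 : Fin n := ⟨0, hn⟩
  set M : ℝ := f (b i0) with hM
  have hM0 : -r i0 ≤ M := by simpa using hle (b i0) i0
  set K : Set V := closedBall (b i0) (M + r i0 + 1) with hK
  have hKc : IsCompact K := isCompact_closedBall _ _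
  have hKne : (b i0) ∈ K := by
    simp only [hK, mem_closedBall, dist_self]; linarith
  obtain ⟨b', hb'K, hb'min⟩ := hKc.exists_isMinOn ⟨b i0, hKne⟩ hfc.continuousOn
  set m : ℝ := f b' with hm
  have hmin : ∀ x, m ≤ f x := by
    intro x
    by_cases hx : x ∈ K
    · exact hb'min hx
    · have hx' : M + r i0 + 1 < dist x (b i0) := by
        simpa [hK, not_le] using hx
      have h1 : M + 1 ≤ f x := by
        have := hle x i0; linarith
      have h2 : m ≤ M := hb'min hKne
      linarith
  -- it suffices to show m ≤ 0
  suffices hm0 : m ≤ 0 by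
    refine ⟨b', fun i => ?_⟩
    have := hle b' i
    simp only [hr] at this ⊢
    linarith
  by_contra hpos
  push_neg at hpos
  -- active set
  set A : Finset (Fin n) := Finset.univ.filter (fun i => dist b' (b i) - r i = m) with hA
  have hAmem : ∀ i ∈ A, dist b' (b i) = m + r i := by
    intro i hi
    have := (Finset.mem_filter.mp hi).2
    linarith
  obtain ⟨i1, _, hi1⟩ := Finset.exists_mem_eq_sup' hne (fun i => dist b' (b i) - r i)
  have hi1A : i1 ∈ A := Finset.mem_filter.mpr ⟨mem_univ _, by rw [← hi1]⟩
  have hAne : A.Nonempty := ⟨i1, hi1A⟩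
  -- the image finset
  set S : Finset V := A.image b with hS
  have hSne : S.Nonempty := hAne.image b
  -- b' must be in the convex hull of S
  have hmem : b' ∈ convexHull ℝ (S : Set V) := by
    by_contra hnot
    obtain ⟨F, c, hFb', hFS⟩ :=
      geometric_hahn_banach_point_closed (convex_convexHull ℝ _)
        (S.finite_toSet.isClosed_convexHull (𝕜 := ℝ)) hnot
    set v : V := (InnerProductSpace.toDual ℝ V).symm F with hv
    have hvin : ∀ x : V, (inner ℝ v x : ℝ) = F x := fun x =>
      InnerProductSpace.toDual_symm_apply
    have hkey : ∀ i ∈ A, (inner ℝ (b' - b i) v : ℝ) < 0 := by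
      intro i hi
      have hbi : (b i : V) ∈ convexHull ℝ (S : Set V) :=
        subset_convexHull ℝ _ (Finset.mem_coe.mpr (by rw [hS]; exact Finset.mem_image_of_mem b hi))
      have := hFS _ hbi
      have h1 : (inner ℝ v (b' - b i) : ℝ) = F b' - F (b i) := by
        rw [inner_sub_right, hvin, hvin]
      rw [real_inner_comm]; rw [h1]; linarith
    have hvne : v ≠ 0 := by
      intro h0
      have := hkey i1 hi1A
      rw [h0] at this; simp at this
    have hv2 : (0:ℝ) < ‖v‖ ^ 2 := pow_pos (norm_pos_iff.mpr hvne) 2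
    -- eventually all distances drop below m
    have hev : ∀ᶠ t in nhdsWithin (0:ℝ) (Set.Ioi 0),
        ∀ i, dist (b' + t • v) (b i) - r i < m := by
      rw [Filter.eventually_all]
      intro i
      by_cases hiA : i ∈ A
      · have hP : (inner ℝ (b' - b i) v : ℝ) < 0 := hkey i hiA
        set P : ℝ := inner ℝ (b' - b i) v with hPdef
        have hε : (0:ℝ) < -2 * P / ‖v‖ ^ 2 := div_pos (by linarith) hv2
        filter_upwards [Ioo_mem_nhdsGT_of_mem
          (Set.mem_Ico.mpr ⟨le_refl (0:ℝ), hε⟩)] with t ht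
        obtain ⟨ht0, htε⟩ := ht
        have htv : t * ‖v‖ ^ 2 < -2 * P := by
          rw [lt_div_iff₀ hv2] at htε
          nlinarith
        have hdist : dist b' (b i) = m + r i := hAmem i hiA
        have hsq : dist (b' + t • v) (b i) ^ 2 < (m + r i) ^ 2 := by
          have hexp : dist (b' + t • v) (b i) ^ 2
              = ‖(b' - b i) + t • v‖ ^ 2 := by
            rw [dist_eq_norm]; ring_nf
            congr 1
            abel
          rw [hexp, norm_add_sq_real, real_inner_smul_right, norm_smul]
          have : ‖b' - b i‖ = m + r i := by
            rw [← dist_eq_norm]; exact hdist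
          rw [this]
          simp only [Real.norm_eq_abs]
          rw [mul_pow, sq_abs]
          nlinarith
        have hmr : 0 ≤ m + r i := by linarith [hr0 i]
        have := lt_of_pow_lt_pow_left₀ 2 hmr hsq
        linarith
      · have hlt : dist b' (b i) - r i < m := by
          have h1 : dist b' (b i) - r i ≤ m := hle b' i
          rcases lt_or_eq_of_le h1 with h2 | h2
          · exact h2
          · exact absurd (show i ∈ A from Finset.mem_filter.mpr ⟨mem_univ i, h2⟩) hiA
        have hcont : Continuous fun t : ℝ => dist (b' + t • v) (b i) - r i := by
          fun_prop
        have := (hcont.continuousAt (x := (0:ℝ))).eventually_lt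
          continuousAt_const (by simpa using hlt)
        exact this.filter_mono nhdsWithin_le_nhds
    obtain ⟨t, ht⟩ := hev.exists
    have : f (b' + t • v) < m := by
      apply (Finset.sup'_lt_iff hne).mpr
      intro i _
      exact ht i
    exact absurd (hmin _) (not_le.mpr this)
  -- now b' ∈ convexHull S; derive contradiction via inner ℝ products
  rw [Finset.convexHull_eq] at hmem
  obtain ⟨w, hw0, hw1, hwc⟩ := hmem
  rw [Finset.centerMass_eq_of_sum_1 _ _ hw1] at hwc
  -- selection function
  have hsel : ∀ y : V, ∃ i : Fin n, y ∈ S → (i ∈ A ∧ b i = y) := by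
    intro y
    by_cases hy : y ∈ S
    · obtain ⟨i, hi, hbi⟩ := Finset.mem_image.mp hy
      exact ⟨i, fun _ => ⟨hi, hbi⟩⟩
    · exact ⟨i1, fun hyS => absurd hyS hy⟩
  choose ι hι using hsel
  set u : V → V := fun y => y - b' with hu
  set vv : V → V := fun y => a (ι y) - a' with hvv
  have hkey : ∀ y ∈ S, ∀ z ∈ S, (inner ℝ (vv y) (vv z) : ℝ) < inner ℝ (u y) (u z) := by
    intro y hy z hz
    obtain ⟨hyA, hyb⟩ := hι y hy
    obtain ⟨hzA, hzb⟩ := hι z hz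
    apply kirsz_inner_key
    · have h1 : ‖vv y‖ = r (ι y) := by
        simp only [hvv, hr, ← dist_eq_norm, dist_comm]
      have h2 : ‖u y‖ = m + r (ι y) := by
        have hd := hAmem _ hyA
        rw [hyb] at hd
        rw [show ‖u y‖ = dist b' y from by rw [dist_comm, dist_eq_norm]]
        exact hd
      rw [h1, h2]; linarith
    · have h1 : ‖vv z‖ = r (ι z) := by
        simp only [hvv, hr, ← dist_eq_norm, dist_comm]
      have h2 : ‖u z‖ = m + r (ι z) := by
        have hd := hAmem _ hzA
        rw [hzb] at hd
        rw [show ‖u z‖ = dist b' z from by rw [dist_comm, dist_eq_norm]]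
        exact hd
      rw [h1, h2]; linarith
    · have h1 : ‖u y - u z‖ = dist (b (ι y)) (b (ι z)) := by
        simp only [hu]
        rw [hyb, hzb, dist_eq_norm]
        congr 1; abel
      have h2 : ‖vv y - vv z‖ = dist (a (ι y)) (a (ι z)) := by
        simp only [hvv]
        rw [dist_eq_norm]
        congr 1; abel
      rw [h1, h2]; exact h _ _
  -- Σ w y • u y = 0
  have hsumu : ∑ y ∈ S, w y • u y = 0 := by
    simp only [hu, smul_sub]
    rw [Finset.sum_sub_distrib, ← Finset.sum_smul, hw1, one_smul]
    simp only [id] at hwc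
    rw [hwc]; abel
  -- expand the double sums
  have hexp : ∀ g : V → V, (inner ℝ (∑ y ∈ S, w y • g y) (∑ z ∈ S, w z • g z) : ℝ)
      = ∑ y ∈ S, ∑ z ∈ S, (w y * w z) * inner ℝ (g y) (g z) := by
    intro g
    rw [sum_inner]
    apply Finset.sum_congr rfl
    intro y _
    rw [inner_sum]
    apply Finset.sum_congr rfl
    intro z _
    rw [real_inner_smul_left, real_inner_smul_right]
    ring
  -- strict comparison
  obtain ⟨y0, hy0S, hy0⟩ : ∃ y ∈ S, 0 < w y := by
    by_contra hcon
    push_neg at hcon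
    have : ∑ y ∈ S, w y ≤ 0 := Finset.sum_nonpos hcon
    linarith
  have hlt : ∑ y ∈ S, ∑ z ∈ S, (w y * w z) * (inner ℝ (vv y) (vv z) : ℝ)
      < ∑ y ∈ S, ∑ z ∈ S, (w y * w z) * (inner ℝ (u y) (u z) : ℝ) := by
    apply Finset.sum_lt_sum
    · intro y hy
      apply Finset.sum_le_sum
      intro z hz
      exact mul_le_mul_of_nonneg_left (le_of_lt (hkey y hy z hz))
        (mul_nonneg (hw0 y hy) (hw0 z hz))
    · refine ⟨y0, hy0S, ?_⟩
      apply Finset.sum_lt_sum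
      · intro z hz
        exact mul_le_mul_of_nonneg_left (le_of_lt (hkey y0 hy0S z hz))
          (mul_nonneg (hw0 y0 hy0S) (hw0 z hz))
      · refine ⟨y0, hy0S, ?_⟩
        have := hkey y0 hy0S y0 hy0S
        have hww : 0 < w y0 * w y0 := mul_pos hy0 hy0
        exact mul_lt_mul_of_pos_left this hww
  have h1 : ∑ y ∈ S, ∑ z ∈ S, (w y * w z) * (inner ℝ (u y) (u z) : ℝ) = 0 := by
    rw [← hexp u, hsumu, inner_zero_left]
  have h2 : (0:ℝ) ≤ ∑ y ∈ S, ∑ z ∈ S, (w y * w z) * (inner ℝ (vv y) (vv z) : ℝ) := by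
    rw [← hexp vv]
    exact real_inner_self_nonneg
  linarith
end

section
/- Kirszbraun's theorem in the plane: let Q ⊆ ℝ² be an arbitrary subset and f : Q → ℝ² a 1-Lipschitz map. Then there exists a 1-Lipschitz map F : ℝ² → ℝ² with F|_Q = f. -/
open Finset Metric

section Kirszbraun

variable {E : Type*} [NormedAddCommGroup E] [InnerProductSpace ℝ E] [FiniteDimensional ℝ E]

lemma inner_sum_sum (B : Finset E) (c : E → ℝ) (a : E → E) :
    (‖∑ y ∈ B, c y • a y‖ : ℝ) ^ 2
      = ∑ y ∈ B, ∑ y' ∈ B, c y * c y' * inner ℝ (a y) (a y') := by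
  rw [← real_inner_self_eq_norm_sq, sum_inner]
  refine Finset.sum_congr rfl fun y _ => ?_
  rw [real_inner_smul_left, inner_sum, Finset.mul_sum]
  refine Finset.sum_congr rfl fun y' _ => ?_
  rw [real_inner_smul_right]; ring

set_option maxHeartbeats 1000000 in
lemma finite_kirszbraun (s : Finset (E × E)) (z : E)
    (hlip : ∀ p ∈ s, ∀ q ∈ s, ‖p.2 - q.2‖ ≤ ‖p.1 - q.1‖) :
    ∃ w : E, ∀ p ∈ s, ‖w - p.2‖ ≤ ‖z - p.1‖ := by
  classical
  rcases s.eq_empty_or_nonempty with rfl | hne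
  · exact ⟨z, by simp⟩
  by_cases hz : ∃ p ∈ s, p.1 = z
  · obtain ⟨p, hp, hpz⟩ := hz
    exact ⟨p.2, fun q hq => hpz ▸ hlip p hp q hq⟩
  push_neg at hz
  set r : E × E → ℝ := fun p => ‖z - p.1‖ with hr_def
  have hr : ∀ p ∈ s, 0 < r p := fun p hp =>
    norm_pos_iff.mpr (sub_ne_zero.mpr fun h => hz p hp h.symm)
  set g : E → ℝ := fun w => s.sup' hne (fun p => ‖w - p.2‖ / r p) with hg_def
  have hg_cont : Continuous g := by
    have h : Continuous (s.sup' hne (fun p (w : E) => ‖w - p.2‖ / r p)) :=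
      Continuous.finset_sup' hne fun p _ =>
        ((continuous_id.sub continuous_const).norm).div_const _
    convert h using 1
    ext w
    simp [hg_def, Finset.sup'_apply]
  have hne' := hne
  obtain ⟨p₀, hp₀⟩ := hne'
  have hg_nonneg : ∀ w, 0 ≤ g w := fun w =>
    le_trans (by positivity) (Finset.le_sup' (fun p => ‖w - p.2‖ / r p) hp₀)
  set K := Metric.closedBall p₀.2 (g p₀.2 * r p₀ + 1) with hK_def
  have hp₀K : p₀.2 ∈ K := mem_closedBall_self (by nlinarith [hg_nonneg p₀.2, hr p₀ hp₀])
  obtain ⟨w₀, hw₀K, hmin⟩ := (isCompact_closedBall _ _).exists_isMinOn ⟨p₀.2, hp₀K⟩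
    hg_cont.continuousOn
  have hglob : ∀ w, g w₀ ≤ g w := by
    intro w
    by_cases hw : w ∈ K
    · exact hmin hw
    · have h1 : g p₀.2 * r p₀ + 1 < ‖w - p₀.2‖ := by
        have := not_le.mp (mem_closedBall.not.mp hw)
        rwa [dist_eq_norm] at this
      have h2 : g p₀.2 < ‖w - p₀.2‖ / r p₀ := by
        rw [lt_div_iff₀ (hr p₀ hp₀)]
        nlinarith [hr p₀ hp₀]
      exact le_trans (hmin hp₀K) (le_trans h2.le
        (Finset.le_sup' (fun p => ‖w - p.2‖ / r p) hp₀))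
  set lam := g w₀ with hlam_def
  have hle : ∀ p ∈ s, ‖w₀ - p.2‖ ≤ lam * r p := fun p hp =>
    (div_le_iff₀ (hr p hp)).mp (Finset.le_sup' (fun p => ‖w₀ - p.2‖ / r p) hp)
  by_cases hlam : lam ≤ 1
  · exact ⟨w₀, fun p hp => le_trans (hle p hp) (by nlinarith [hr p hp])⟩
  push_neg at hlam
  exfalso
  set A := s.filter (fun p => ‖w₀ - p.2‖ = lam * r p) with hA_def
  have hA_ne : A.Nonempty := by
    obtain ⟨p₁, hp₁, hp₁eq⟩ := Finset.exists_mem_eq_sup' hne (fun p => ‖w₀ - p.2‖ / r p)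
    refine ⟨p₁, Finset.mem_filter.mpr ⟨hp₁, ?_⟩⟩
    have h := hr p₁ hp₁
    have h2 : lam = ‖w₀ - p₁.2‖ / r p₁ := hp₁eq
    rw [h2, div_mul_cancel₀ _ h.ne']
  set B := A.image Prod.snd with hB_def
  have hB_ne : B.Nonempty := hA_ne.image _
  have hactive : ∀ p ∈ A, ‖w₀ - p.2‖ = lam * r p := fun p hp =>
    (Finset.mem_filter.mp hp).2
  have hAs : ∀ p ∈ A, p ∈ s := fun p hp => (Finset.mem_filter.mp hp).1
  -- w₀ lies in the convex hull of the active images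
  have hhull : w₀ ∈ convexHull ℝ (B : Set E) := by
    by_contra hcon
    set C := convexHull ℝ (B : Set E) with hC_def
    have hCne : C.Nonempty := ⟨_, subset_convexHull ℝ _ (by exact_mod_cast hB_ne.choose_spec)⟩
    have hCconv : Convex ℝ C := convex_convexHull ℝ _
    have hCcompact : IsCompact C := B.finite_toSet.isCompact_convexHull ℝ
    obtain ⟨v, hvC, hv⟩ := exists_norm_eq_iInf_of_complete_convex hCne
      hCcompact.isClosed.isComplete hCconv w₀
    have hsep : ∀ c ∈ C, (inner ℝ (w₀ - v) (c - v) : ℝ) ≤ 0 :=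
      (norm_eq_iInf_iff_real_inner_le_zero hCconv hvC).mp hv
    set δ := ‖w₀ - v‖ with hδ_def
    have hδ : 0 < δ := norm_pos_iff.mpr (sub_ne_zero.mpr fun h => hcon (h ▸ hvC))
    have hkey : ∀ y ∈ B, δ ^ 2 ≤ (inner ℝ (y - w₀) (v - w₀) : ℝ) := by
      intro y hy
      have hyC : y ∈ C := subset_convexHull ℝ _ (by exact_mod_cast hy)
      have h1 := hsep y hyC
      have h2 : (y : E) - w₀ = (y - v) + (v - w₀) := by abel
      rw [h2, inner_add_left]
      have h3 : (inner ℝ (y - v) (v - w₀) : ℝ) = -(inner ℝ (w₀ - v) (y - v) : ℝ) := by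
        rw [real_inner_comm, ← inner_neg_left]
        congr 1; abel
      have h4 : (inner ℝ (v - w₀) (v - w₀) : ℝ) = δ ^ 2 := by
        rw [real_inner_self_eq_norm_sq, hδ_def, norm_sub_rev]
      linarith
    set N := s.filter (fun p => ‖w₀ - p.2‖ ≠ lam * r p) with hN_def
    set ε : ℝ := if hN : N.Nonempty then N.inf' hN (fun p => lam * r p - ‖w₀ - p.2‖) else 1
      with hε_def
    have hε : 0 < ε := by
      rw [hε_def]
      split
      · rename_i hN
        rw [Finset.lt_inf'_iff]
        intro p hp
        obtain ⟨hps, hpne⟩ := Finset.mem_filter.mp hp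
        have := hle p hps
        cases lt_or_eq_of_le this with
        | inl h => linarith
        | inr h => exact absurd h hpne
      · norm_num
    have hεN : ∀ p ∈ N, ε ≤ lam * r p - ‖w₀ - p.2‖ := by
      intro p hp
      rw [hε_def, dif_pos ⟨p, hp⟩]
      exact Finset.inf'_le _ hp
    set t : ℝ := min (1/2) (ε / (2 * δ)) with ht_def
    have ht0 : 0 < t := lt_min (by norm_num) (by positivity)
    have ht1 : t ≤ 1/2 := min_le_left _ _
    have htδ : t * δ ≤ ε / 2 := by
      have := min_le_right (1/2 : ℝ) (ε / (2 * δ))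
      calc t * δ ≤ (ε / (2 * δ)) * δ := by nlinarith
        _ = ε / 2 := by field_simp
    set w₁ := w₀ + t • (v - w₀) with hw₁_def
    have hdiff : ∀ y : E, w₁ - y = (w₀ - y) + t • (v - w₀) := fun y => by
      rw [hw₁_def]; abel
    have hlt : ∀ p ∈ s, ‖w₁ - p.2‖ < lam * r p := by
      intro p hp
      by_cases hpA : ‖w₀ - p.2‖ = lam * r p
      · have hpB : p.2 ∈ B := Finset.mem_image_of_mem _ (Finset.mem_filter.mpr ⟨hp, hpA⟩)
        have hk := hkey p.2 hpB
        have hexp : ‖w₁ - p.2‖ ^ 2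
            = ‖w₀ - p.2‖ ^ 2 - 2 * t * (inner ℝ (p.2 - w₀) (v - w₀) : ℝ) + t ^ 2 * δ ^ 2 := by
          rw [hdiff p.2, norm_add_sq_real, real_inner_smul_right, norm_smul]
          have h5 : (inner ℝ (w₀ - p.2) (v - w₀) : ℝ) = -(inner ℝ (p.2 - w₀) (v - w₀) : ℝ) := by
            rw [← inner_neg_left]; congr 1; abel
          rw [h5]
          have h6 : ‖t‖ = t := abs_of_pos ht0
          have h7 : ‖v - w₀‖ = δ := by rw [hδ_def, norm_sub_rev]
          rw [h6, h7]
          ring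
        have hsq : ‖w₁ - p.2‖ ^ 2 < (lam * r p) ^ 2 := by
          rw [hexp, ← hpA]
          have hh1 : t * δ ^ 2 ≤ t * inner ℝ (p.2 - w₀) (v - w₀) :=
            mul_le_mul_of_nonneg_left hk ht0.le
          nlinarith [hh1, ht0, ht1, hδ, mul_pos ht0 (pow_pos hδ 2)]
        exact lt_of_pow_lt_pow_left₀ 2 (by nlinarith [hr p hp]) hsq
      · have hpN : p ∈ N := Finset.mem_filter.mpr ⟨hp, hpA⟩
        have h1 := hεN p hpN
        calc ‖w₁ - p.2‖ ≤ ‖w₀ - p.2‖ + t * δ := by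
              rw [hdiff p.2]
              refine (norm_add_le _ _).trans ?_
              have hns : ‖t • (v - w₀)‖ = t * δ := by
                rw [norm_smul, Real.norm_eq_abs, abs_of_pos ht0, hδ_def, norm_sub_rev]
              rw [hns]
          _ < lam * r p := by linarith
    have hgw₁ : g w₁ < lam :=
      (Finset.sup'_lt_iff hne).mpr fun p hp => (div_lt_iff₀ (hr p hp)).mpr (hlt p hp)
    exact absurd (hglob w₁) (not_le.mpr hgw₁)
  -- extract convex combination
  rw [hB_def, Finset.convexHull_eq] at hhull
  obtain ⟨μ, hμ0, hμ1, hμc⟩ := hhull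
  rw [Finset.centerMass_eq_of_sum_1 _ _ hμ1] at hμc
  simp only [id] at hμc
  -- choose preimages
  have hσex : ∀ y ∈ B, ∃ p : E × E, p ∈ A ∧ p.2 = y := fun y hy => by
    obtain ⟨p, hp, hpy⟩ := Finset.mem_image.mp hy
    exact ⟨p, hp, hpy⟩
  set σ : E → E × E := fun y => if h : y ∈ B then (hσex y h).choose else (z, y) with hσ_def
  have hσA : ∀ y ∈ B, σ y ∈ A := fun y hy => by
    rw [hσ_def]; simp only [dif_pos hy]; exact (hσex y hy).choose_spec.1
  have hσ2 : ∀ y ∈ B, (σ y).2 = y := fun y hy => by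
    rw [hσ_def]; simp only [dif_pos hy]; exact (hσex y hy).choose_spec.2
  set xx : E → E := fun y => (σ y).1 with hxx_def
  set rr : E → ℝ := fun y => ‖z - xx y‖ with hrr_def
  have hrr_pos : ∀ y ∈ B, 0 < rr y := fun y hy => hr _ (hAs _ (hσA y hy))
  have hact : ∀ y ∈ B, ‖w₀ - y‖ = lam * rr y := fun y hy => by
    have := hactive _ (hσA y hy)
    rwa [hσ2 y hy] at this
  have hlip' : ∀ y ∈ B, ∀ y' ∈ B, ‖y - y'‖ ≤ ‖xx y - xx y'‖ := by
    intro y hy y' hy'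
    have := hlip (σ y) (hAs _ (hσA y hy)) (σ y') (hAs _ (hσA y' hy'))
    rwa [hσ2 y hy, hσ2 y' hy'] at this
  -- the zero sum
  have hzero : (0 : ℝ) = ∑ y ∈ B, ∑ y' ∈ B, μ y * μ y' * inner ℝ (y - w₀) (y' - w₀) := by
    rw [← inner_sum_sum B μ (fun y => y - w₀)]
    have h : ∑ y ∈ B, μ y • (y - w₀) = 0 := by
      simp only [smul_sub]
      rw [Finset.sum_sub_distrib, hμc, ← Finset.sum_smul, hμ1, one_smul, sub_self]
    rw [h]; simp
  -- termwise lower bound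
  have hterm : ∀ y ∈ B, ∀ y' ∈ B,
      (lam ^ 2 - 1) / 2 * (rr y ^ 2 + rr y' ^ 2) + (inner ℝ (z - xx y) (z - xx y') : ℝ)
        ≤ (inner ℝ (y - w₀) (y' - w₀) : ℝ) := by
    intro y hy y' hy'
    have e1 : 2 * (inner ℝ (y - w₀) (y' - w₀) : ℝ)
        = ‖y - w₀‖ ^ 2 + ‖y' - w₀‖ ^ 2 - ‖y - y'‖ ^ 2 := by
      have h := norm_sub_sq_real (y - w₀) (y' - w₀)
      rw [show (y - w₀) - (y' - w₀) = y - y' by abel] at h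
      linarith
    have e2 : ‖xx y - xx y'‖ ^ 2
        = rr y ^ 2 + rr y' ^ 2 - 2 * (inner ℝ (z - xx y) (z - xx y') : ℝ) := by
      have h := norm_sub_sq_real (z - xx y') (z - xx y)
      rw [show (z - xx y') - (z - xx y) = xx y - xx y' by abel] at h
      have h2 : (inner ℝ (z - xx y') (z - xx y) : ℝ) = inner ℝ (z - xx y) (z - xx y') :=
        real_inner_comm _ _
      simp only [hrr_def]
      linarith
    have e3 : ‖y - y'‖ ^ 2 ≤ ‖xx y - xx y'‖ ^ 2 :=
      pow_le_pow_left₀ (norm_nonneg _) (hlip' y hy y' hy') 2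
    have e4 : ‖y - w₀‖ ^ 2 = lam ^ 2 * rr y ^ 2 := by
      rw [norm_sub_rev, hact y hy]; ring
    have e5 : ‖y' - w₀‖ ^ 2 = lam ^ 2 * rr y' ^ 2 := by
      rw [norm_sub_rev, hact y' hy']; ring
    linarith [e1, e2, e3, e4, e5]
  -- nonneg second piece
  have hS2 : (0 : ℝ) ≤ ∑ y ∈ B, ∑ y' ∈ B, μ y * μ y' * inner ℝ (z - xx y) (z - xx y') := by
    rw [← inner_sum_sum B μ (fun y => z - xx y)]
    positivity
  -- S1 identity
  have hS1 : ∑ y ∈ B, ∑ y' ∈ B, μ y * μ y' * ((lam ^ 2 - 1) / 2 * (rr y ^ 2 + rr y' ^ 2))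
      = (lam ^ 2 - 1) * ∑ y ∈ B, μ y * rr y ^ 2 := by
    have hinner : ∀ y ∈ B, ∑ y' ∈ B, μ y * μ y' * ((lam ^ 2 - 1) / 2 * (rr y ^ 2 + rr y' ^ 2))
        = μ y * ((lam ^ 2 - 1) / 2) * rr y ^ 2
          + μ y * ((lam ^ 2 - 1) / 2) * ∑ y' ∈ B, μ y' * rr y' ^ 2 := by
      intro y hy
      calc ∑ y' ∈ B, μ y * μ y' * ((lam ^ 2 - 1) / 2 * (rr y ^ 2 + rr y' ^ 2))
          = ∑ y' ∈ B, (μ y * ((lam ^ 2 - 1) / 2) * rr y ^ 2 * μ y'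
              + μ y * ((lam ^ 2 - 1) / 2) * (μ y' * rr y' ^ 2)) :=
            Finset.sum_congr rfl fun y' _ => by ring
        _ = μ y * ((lam ^ 2 - 1) / 2) * rr y ^ 2 * ∑ y' ∈ B, μ y'
              + μ y * ((lam ^ 2 - 1) / 2) * ∑ y' ∈ B, μ y' * rr y' ^ 2 := by
            rw [Finset.sum_add_distrib, ← Finset.mul_sum, ← Finset.mul_sum]
        _ = _ := by rw [hμ1]; ring
    calc ∑ y ∈ B, ∑ y' ∈ B, μ y * μ y' * ((lam ^ 2 - 1) / 2 * (rr y ^ 2 + rr y' ^ 2))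
        = ∑ y ∈ B, (μ y * ((lam ^ 2 - 1) / 2) * rr y ^ 2
            + μ y * ((lam ^ 2 - 1) / 2) * ∑ y' ∈ B, μ y' * rr y' ^ 2) :=
          Finset.sum_congr rfl (fun y hy => hinner y hy)
      _ = ∑ y ∈ B, μ y * ((lam ^ 2 - 1) / 2) * rr y ^ 2
            + (∑ y ∈ B, μ y) * ((lam ^ 2 - 1) / 2) * ∑ y' ∈ B, μ y' * rr y' ^ 2 := by
          rw [Finset.sum_add_distrib]
          congr 1
          rw [Finset.sum_mul, Finset.sum_mul]
      _ = (lam ^ 2 - 1) * ∑ y ∈ B, μ y * rr y ^ 2 := by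
          rw [hμ1, one_mul]
          conv_rhs => rw [Finset.mul_sum]
          rw [Finset.mul_sum, ← Finset.sum_add_distrib]
          exact Finset.sum_congr rfl (fun y _ => by ring)
  -- combine everything
  have hcomb : (lam ^ 2 - 1) * ∑ y ∈ B, μ y * rr y ^ 2
      + ∑ y ∈ B, ∑ y' ∈ B, μ y * μ y' * inner ℝ (z - xx y) (z - xx y') ≤ 0 := by
    rw [← hS1, ← Finset.sum_add_distrib]
    have h : ∑ y ∈ B, (∑ y' ∈ B, μ y * μ y' * ((lam ^ 2 - 1) / 2 * (rr y ^ 2 + rr y' ^ 2))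
        + ∑ y' ∈ B, μ y * μ y' * inner ℝ (z - xx y) (z - xx y'))
        ≤ ∑ y ∈ B, ∑ y' ∈ B, μ y * μ y' * inner ℝ (y - w₀) (y' - w₀) := by
      refine Finset.sum_le_sum fun y hy => ?_
      rw [← Finset.sum_add_distrib]
      refine Finset.sum_le_sum fun y' hy' => ?_
      have h1 := hterm y hy y' hy'
      have h2 : 0 ≤ μ y * μ y' := mul_nonneg (hμ0 y hy) (hμ0 y' hy')
      nlinarith [h1, h2]
    linarith [h, hzero.le, hzero.ge]
  have hSpos : 0 < ∑ y ∈ B, μ y * rr y ^ 2 := by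
    obtain ⟨y₀, hy₀, hμy₀⟩ : ∃ y ∈ B, 0 < μ y := by
      by_contra hc
      push_neg at hc
      have : ∑ y ∈ B, μ y ≤ 0 := Finset.sum_nonpos fun y hy => hc y hy
      rw [hμ1] at this; linarith
    have h1 : 0 < μ y₀ * rr y₀ ^ 2 := by
      have := hrr_pos y₀ hy₀; positivity
    refine lt_of_lt_of_le h1
      (Finset.single_le_sum (f := fun y => μ y * rr y ^ 2) (fun y hy => ?_) hy₀)
    have := (hrr_pos y hy).le
    have := hμ0 y hy
    positivity
  have hl2 : 0 < lam ^ 2 - 1 := by nlinarith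
  nlinarith [hcomb, hS2, mul_pos hl2 hSpos]

lemma onepoint_kirszbraun (T : Set (E × E))
    (hT : ∀ p ∈ T, ∀ q ∈ T, ‖p.2 - q.2‖ ≤ ‖p.1 - q.1‖) (z : E) :
    ∃ w : E, ∀ p ∈ T, ‖w - p.2‖ ≤ ‖z - p.1‖ := by
  classical
  rcases T.eq_empty_or_nonempty with rfl | ⟨p₀, hp₀⟩
  · exact ⟨z, by simp⟩
  by_contra hcon
  push_neg at hcon
  set ball : T → Set E := fun p => Metric.closedBall (p : E × E).2 ‖z - (p : E × E).1‖
    with hball_def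
  have hempty : Metric.closedBall p₀.2 ‖z - p₀.1‖ ∩ ⋂ p : T, ball p = ∅ := by
    ext w
    simp only [Set.mem_inter_iff, Set.mem_iInter, Set.mem_empty_iff_false, iff_false,
      not_and, mem_closedBall, dist_eq_norm, hball_def]
    intro _ hall
    obtain ⟨p, hp, hpw⟩ := hcon w
    exact absurd (hall ⟨p, hp⟩) (not_le.mpr hpw)
  obtain ⟨u, hu⟩ := (isCompact_closedBall p₀.2 ‖z - p₀.1‖).elim_finite_subfamily_closed ball
    (fun p => Metric.isClosed_closedBall) hempty
  set sfin : Finset (E × E) := insert p₀ (u.image Subtype.val) with hsfin_def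
  have hsT : ∀ p ∈ sfin, p ∈ T := by
    intro p hp
    rcases Finset.mem_insert.mp hp with h | h
    · exact h ▸ hp₀
    · obtain ⟨q, _, hq⟩ := Finset.mem_image.mp h
      exact hq ▸ q.2
  obtain ⟨w, hw⟩ := finite_kirszbraun sfin z fun p hp q hq => hT p (hsT p hp) q (hsT q hq)
  have hmem : w ∈ Metric.closedBall p₀.2 ‖z - p₀.1‖ ∩ ⋂ p ∈ u, ball p := by
    refine ⟨?_, ?_⟩
    · rw [mem_closedBall, dist_eq_norm]
      exact hw p₀ (Finset.mem_insert_self _ _)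
    · simp only [Set.mem_iInter]
      intro p hpu
      rw [hball_def]
      simp only [mem_closedBall, dist_eq_norm]
      exact hw p (Finset.mem_insert.mpr (Or.inr (Finset.mem_image.mpr ⟨p, hpu, rfl⟩)))
  rw [hu] at hmem
  exact hmem

end Kirszbraun

/-- Kirszbraun's theorem in the plane: a 1-Lipschitz map defined on an arbitrary subset
`Q ⊆ ℝ²` extends to a 1-Lipschitz map on all of ℝ². -/
theorem stmt18 (Q : Set (EuclideanSpace ℝ (Fin 2)))
    (f : EuclideanSpace ℝ (Fin 2) → EuclideanSpace ℝ (Fin 2))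
    (hf : LipschitzOnWith 1 f Q) :
    ∃ F : EuclideanSpace ℝ (Fin 2) → EuclideanSpace ℝ (Fin 2),
      LipschitzWith 1 F ∧ ∀ x ∈ Q, F x = f x := by
  classical
  set S : Set (Set (EuclideanSpace ℝ (Fin 2) × EuclideanSpace ℝ (Fin 2))) :=
    {T | ∀ p ∈ T, ∀ q ∈ T, ‖p.2 - q.2‖ ≤ ‖p.1 - q.1‖} with hS_def
  set T₀ : Set (EuclideanSpace ℝ (Fin 2) × EuclideanSpace ℝ (Fin 2)) :=
    (fun q => (q, f q)) '' Q with hT₀_def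
  have hT₀ : T₀ ∈ S := by
    rintro p ⟨x, hx, rfl⟩ q ⟨y, hy, rfl⟩
    have := hf.dist_le_mul x hx y hy
    rw [NNReal.coe_one, one_mul] at this
    simpa [dist_eq_norm] using this
  have hub : ∀ c ⊆ S, IsChain (· ⊆ ·) c → c.Nonempty → ∃ ub ∈ S, ∀ s ∈ c, s ⊆ ub := by
    intro c hc hchain hcne
    refine ⟨⋃₀ c, ?_, fun s hs => Set.subset_sUnion_of_mem hs⟩
    rintro p ⟨a, ha, hpa⟩ q ⟨b, hb, hqb⟩
    rcases hchain.total ha hb with h | h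
    · exact hc hb p (h hpa) q hqb
    · exact hc ha p hpa q (h hqb)
  obtain ⟨Tm, hsub, hmax⟩ := zorn_subset_nonempty S hub T₀ hT₀
  have htotal : ∀ z : EuclideanSpace ℝ (Fin 2), ∃ w, (z, w) ∈ Tm := by
    intro z
    by_contra hz
    push_neg at hz
    obtain ⟨w, hw⟩ := onepoint_kirszbraun Tm hmax.prop z
    have hgood : Tm ∪ {(z, w)} ∈ S := by
      rintro p (hp | hp) q (hq | hq)
      · exact hmax.prop p hp q hq
      · rw [Set.mem_singleton_iff] at hq
        subst hq
        have := hw p hp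
        rw [norm_sub_rev, norm_sub_rev z] at this
        exact this
      · rw [Set.mem_singleton_iff] at hp
        subst hp
        exact hw q hq
      · rw [Set.mem_singleton_iff] at hp hq
        subst hp; subst hq; simp
    have heq : Tm ∪ {(z, w)} ⊆ Tm := hmax.2 hgood Set.subset_union_left
    exact hz w (heq (Set.mem_union_right _ rfl))
  choose F hF using htotal
  refine ⟨F, ?_, ?_⟩
  · refine LipschitzWith.of_dist_le_mul fun x y => ?_
    have := hmax.prop (x, F x) (hF x) (y, F y) (hF y)
    rw [NNReal.coe_one, one_mul]
    simpa [dist_eq_norm] using this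
  · intro x hx
    have h1 : (x, f x) ∈ Tm := hsub ⟨x, hx, rfl⟩
    have h2 := hmax.prop (x, F x) (hF x) (x, f x) h1
    simp only [sub_self, norm_zero] at h2
    have := norm_le_zero_iff.mp h2
    exact sub_eq_zero.mp this
end
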